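/- arXiv:1801.07160 — 4 statements merged into one kernel-verified Lean document; each statement's English description precedes it below -/
import Mathlib

section
/- Let 0 < α < 1, let 0 = t^0 < t^1 < ⋯ < t^N = T be any temporal mesh on [0,T] with steps Δt^n = t^n − t^{n−1} and Δt^max = max_n Δt^n, and let v : [0,T] → ℝ be twice continuously differentiable. Then for every 1 ≤ n ≤ N the L1 remainder satisfies |r^n| ≤ ( (Δt^n)^2/(2(1−α)) + (Δt^max)^2/8 ) (Δt^n)^{−α} · max_{0 ≤ t ≤ t^n} |v''(t)|. -/
open intervalIntegral MeasureTheory Set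


lemma L1aux_smooth {v : ℝ → ℝ} (hv : ContDiff ℝ 2 v) :
    Differentiable ℝ v ∧ Differentiable ℝ (deriv v) ∧ Continuous (deriv (deriv v)) := by
  have h1 : ContDiff ℝ 1 (deriv v) :=
    (contDiff_succ_iff_deriv.mp (show ContDiff ℝ (1+1) v from hv)).2.2
  exact ⟨hv.differentiable two_ne_zero, h1.differentiable one_ne_zero,
    (contDiff_one_iff_deriv.mp h1).2⟩


lemma L1aux_interp_err {v : ℝ → ℝ} (hv : ContDiff ℝ 2 v) {a b M : ℝ} (hab : a < b)
    (hM : ∀ u ∈ Set.Icc a b, |deriv (deriv v) u| ≤ M) {s : ℝ} (hs : s ∈ Set.Icc a b) :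
    |v s - (v a + (v b - v a) / (b - a) * (s - a))| ≤ M * (b - a) ^ 2 / 8 := by
  obtain ⟨hd1, hd2, hc2⟩ := L1aux_smooth hv
  obtain ⟨has, hsb⟩ := hs
  have hM0 : 0 ≤ M := le_trans (abs_nonneg _) (hM a ⟨le_refl a, hab.le⟩)
  have hcont : Continuous fun u => (u - a) * deriv (deriv v) u :=
    (continuous_id.sub continuous_const).mul hc2
  have hcont' : Continuous fun u => (b - u) * deriv (deriv v) u :=
    (continuous_const.sub continuous_id).mul hc2
  -- FTC for I1
  have hI1 : (∫ u in a..s, (u - a) * deriv (deriv v) u)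
      = ((s - a) * deriv v s - v s) - ((a - a) * deriv v a - v a) := by
    refine integral_eq_sub_of_hasDerivAt (f := fun u => (u - a) * deriv v u - v u) ?_ ?_
    · intro u _
      have h1 : HasDerivAt (fun u => (u - a) * deriv v u)
          (1 * deriv v u + (u - a) * deriv (deriv v) u) u :=
        ((hasDerivAt_id u).sub_const a).mul (hd2 u).hasDerivAt
      have h2 := h1.sub (hd1 u).hasDerivAt
      exact h2.congr_deriv (by ring)
    · exact hcont.intervalIntegrable _ _
  have hI2 : (∫ u in s..b, (b - u) * deriv (deriv v) u)
      = ((b - b) * deriv v b + v b) - ((b - s) * deriv v s + v s) := by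
    refine integral_eq_sub_of_hasDerivAt (f := fun u => (b - u) * deriv v u + v u) ?_ ?_
    · intro u _
      have h1 : HasDerivAt (fun u => (b - u) * deriv v u)
          ((-1) * deriv v u + (b - u) * deriv (deriv v) u) u :=
        ((hasDerivAt_id u).const_sub b).mul (hd2 u).hasDerivAt
      have h2 := h1.add (hd1 u).hasDerivAt
      exact h2.congr_deriv (by ring)
    · exact hcont'.intervalIntegrable _ _
  -- bounds
  have hb1 : |∫ u in a..s, (u - a) * deriv (deriv v) u| ≤ M * (s - a) ^ 2 / 2 := by
    have h := intervalIntegral.norm_integral_le_of_norm_le (μ := volume)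
      (f := fun u => (u - a) * deriv (deriv v) u) (g := fun u => M * (u - a)) (a := a) (b := s)
      ?_ ?_ ?_
    · have hcalc : (∫ u in a..s, M * (u - a)) = M * (s - a) ^ 2 / 2 := by
        rw [intervalIntegral.integral_const_mul,
          intervalIntegral.integral_sub (intervalIntegrable_id)
            (intervalIntegrable_const), integral_id, intervalIntegral.integral_const]
        simp only [smul_eq_mul]
        ring
      rw [hcalc] at h
      calc |∫ u in a..s, (u - a) * deriv (deriv v) u| ≤ |M * (s - a) ^ 2 / 2| := h.trans (le_abs_self _)
        _ = M * (s - a) ^ 2 / 2 := abs_of_nonneg (by positivity)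
    · exact has
    · filter_upwards with u hu
      have hua : 0 ≤ u - a := by linarith [hu.1]
      have := hM u ⟨hu.1.le, hu.2.trans hsb⟩
      calc ‖(u - a) * deriv (deriv v) u‖ = (u - a) * |deriv (deriv v) u| := by
            rw [Real.norm_eq_abs, abs_mul, abs_of_nonneg hua]
        _ ≤ M * (u - a) := by nlinarith
    · exact (continuous_const.mul (continuous_id.sub continuous_const)).intervalIntegrable _ _
  have hb2 : |∫ u in s..b, (b - u) * deriv (deriv v) u| ≤ M * (b - s) ^ 2 / 2 := by
    have h := intervalIntegral.norm_integral_le_of_norm_le (μ := volume)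
      (f := fun u => (b - u) * deriv (deriv v) u) (g := fun u => M * (b - u)) (a := s) (b := b)
      ?_ ?_ ?_
    · have hcalc : (∫ u in s..b, M * (b - u)) = M * (b - s) ^ 2 / 2 := by
        rw [intervalIntegral.integral_const_mul,
          intervalIntegral.integral_sub (intervalIntegrable_const) (intervalIntegrable_id),
          integral_id, intervalIntegral.integral_const]
        simp only [smul_eq_mul]
        ring
      rw [hcalc] at h
      calc |∫ u in s..b, (b - u) * deriv (deriv v) u| ≤ |M * (b - s) ^ 2 / 2| := h.trans (le_abs_self _)
        _ = M * (b - s) ^ 2 / 2 := abs_of_nonneg (by positivity)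
    · exact hsb
    · filter_upwards with u hu
      have hub : 0 ≤ b - u := by linarith [hu.2]
      have := hM u ⟨has.trans hu.1.le, hu.2⟩
      calc ‖(b - u) * deriv (deriv v) u‖ = (b - u) * |deriv (deriv v) u| := by
            rw [Real.norm_eq_abs, abs_mul, abs_of_nonneg hub]
        _ ≤ M * (b - u) := by nlinarith
    · exact (continuous_const.mul (continuous_const.sub continuous_id)).intervalIntegrable _ _
  -- combine
  set I1 := ∫ u in a..s, (u - a) * deriv (deriv v) u with hI1def
  set I2 := ∫ u in s..b, (b - u) * deriv (deriv v) u with hI2def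
  have hba : b - a ≠ 0 := by linarith
  have hkey : v s - (v a + (v b - v a) / (b - a) * (s - a))
      = -(((b - s) * I1 + (s - a) * I2) / (b - a)) := by
    rw [hI1, hI2]
    field_simp
    ring
  rw [hkey, abs_neg, abs_div, abs_of_pos (show (0:ℝ) < b - a by linarith)]
  rw [div_le_iff₀ (by linarith)]
  have htri : |(b - s) * I1 + (s - a) * I2| ≤ (b - s) * (M * (s - a) ^ 2 / 2)
      + (s - a) * (M * (b - s) ^ 2 / 2) := by
    calc |(b - s) * I1 + (s - a) * I2| ≤ |(b - s) * I1| + |(s - a) * I2| := abs_add_le _ _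
      _ = (b - s) * |I1| + (s - a) * |I2| := by
          rw [abs_mul, abs_mul, abs_of_nonneg (by linarith : (0:ℝ) ≤ b - s),
            abs_of_nonneg (by linarith : (0:ℝ) ≤ s - a)]
      _ ≤ _ := by
          have h1 : (0:ℝ) ≤ b - s := by linarith
          have h2 : (0:ℝ) ≤ s - a := by linarith
          exact add_le_add (mul_le_mul_of_nonneg_left hb1 h1)
            (mul_le_mul_of_nonneg_left hb2 h2)
  refine htri.trans ?_
  nlinarith [mul_nonneg (mul_nonneg hM0 (show (0:ℝ) ≤ b - a by linarith))
    (sq_nonneg ((s - a) - (b - s)))]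

lemma L1aux_slope_err {v : ℝ → ℝ} (hv : ContDiff ℝ 2 v) {a b M : ℝ} (hab : a < b)
    (hM : ∀ u ∈ Set.Icc a b, |deriv (deriv v) u| ≤ M) {s : ℝ} (hs : s ∈ Set.Icc a b) :
    |deriv v s - (v b - v a) / (b - a)| ≤ M * (b - a) / 2 := by
  obtain ⟨hd1, hd2, hc2⟩ := L1aux_smooth hv
  obtain ⟨has, hsb⟩ := hs
  have hM0 : 0 ≤ M := le_trans (abs_nonneg _) (hM a ⟨le_refl a, hab.le⟩)
  have hc1 : Continuous (deriv v) := hd2.continuous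
  have hvv : v b - v a = ∫ u in a..b, deriv v u :=
    (integral_eq_sub_of_hasDerivAt (fun u _ => (hd1 u).hasDerivAt)
      (hc1.intervalIntegrable _ _)).symm
  have hstep : ∀ u ∈ Set.Icc a b, |deriv v s - deriv v u| ≤ M * |s - u| := by
    intro u hu
    have hftc : deriv v s - deriv v u = ∫ x in u..s, deriv (deriv v) x :=
      (integral_eq_sub_of_hasDerivAt (fun x _ => (hd2 x).hasDerivAt)
        (hc2.intervalIntegrable _ _)).symm
    rw [hftc]
    have := intervalIntegral.norm_integral_le_of_norm_le_const
      (f := fun x => deriv (deriv v) x) (C := M) (a := u) (b := s) ?_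
    · simpa [abs_sub_comm] using this
    · intro x hx
      have hx' : x ∈ Set.Icc a b := by
        rcases Set.uIoc_subset_uIcc hx with h
        have := Set.uIcc_subset_Icc ⟨hu.1, hu.2⟩ ⟨has, hsb⟩ h
        exact this
      exact hM x hx'
  -- representation
  have hrep : deriv v s * (b - a) - (v b - v a) = ∫ u in a..b, (deriv v s - deriv v u) := by
    rw [intervalIntegral.integral_sub (intervalIntegrable_const) (hc1.intervalIntegrable _ _),
      intervalIntegral.integral_const, ← hvv]
    simp [smul_eq_mul, mul_comm]
  have habs : |deriv v s * (b - a) - (v b - v a)| ≤ M * ((s - a) ^ 2 + (b - s) ^ 2) / 2 := by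
    rw [hrep]
    have h := intervalIntegral.norm_integral_le_of_norm_le (μ := volume)
      (f := fun u => deriv v s - deriv v u) (g := fun u => M * |s - u|) (a := a) (b := b) ?_ ?_ ?_
    · have hcalc : (∫ u in a..b, M * |s - u|) = M * ((s - a) ^ 2 + (b - s) ^ 2) / 2 := by
        rw [intervalIntegral.integral_const_mul]
        have hsplit : (∫ u in a..s, |s - u|) + (∫ u in s..b, |s - u|) = ∫ u in a..b, |s - u| :=
          intervalIntegral.integral_add_adjacent_intervals
            ((continuous_const.sub continuous_id).abs.intervalIntegrable _ _)
            ((continuous_const.sub continuous_id).abs.intervalIntegrable _ _)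
        have h1 : (∫ u in a..s, |s - u|) = (s - a) ^ 2 / 2 := by
          rw [intervalIntegral.integral_congr (g := fun u => s - u) ?_]
          · rw [intervalIntegral.integral_sub intervalIntegrable_const intervalIntegrable_id,
              integral_id, intervalIntegral.integral_const]
            simp only [smul_eq_mul]; ring
          · intro u hu
            rw [Set.uIcc_of_le has] at hu
            exact abs_of_nonneg (by linarith [hu.2])
        have h2 : (∫ u in s..b, |s - u|) = (b - s) ^ 2 / 2 := by
          rw [intervalIntegral.integral_congr (g := fun u => u - s) ?_]
          · rw [intervalIntegral.integral_sub intervalIntegrable_id intervalIntegrable_const,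
              integral_id, intervalIntegral.integral_const]
            simp only [smul_eq_mul]; ring
          · intro u hu
            rw [Set.uIcc_of_le hsb] at hu
            show |s - u| = u - s
            rw [abs_sub_comm]
            exact abs_of_nonneg (by linarith [hu.1])
        rw [← hsplit, h1, h2]; ring
      rw [hcalc] at h
      refine h.trans ?_
      exact le_rfl
    · exact hab.le
    · filter_upwards with u hu
      exact hstep u ⟨hu.1.le, hu.2⟩
    · exact (continuous_const.mul (continuous_const.sub continuous_id).abs).intervalIntegrable _ _
  have hba' : (0:ℝ) < b - a := by linarith
  have heq : deriv v s - (v b - v a) / (b - a)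
      = (deriv v s * (b - a) - (v b - v a)) / (b - a) := by
    field_simp
  rw [heq, abs_div, abs_of_pos hba', div_le_iff₀ hba']
  nlinarith [mul_nonneg (mul_nonneg hM0 (show (0:ℝ) ≤ s - a by linarith))
    (show (0:ℝ) ≤ b - s by linarith)]

lemma L1aux_Iw {c α : ℝ} (hα : -α > -1) (a b : ℝ) :
    IntervalIntegrable (fun s => (c - s) ^ (-α)) volume a b := by
  have := (intervalIntegrable_rpow' (a := c - b) (b := c - a) hα).comp_sub_left c
  simpa using this.symm

lemma L1aux_intw {c α : ℝ} (hα0 : 0 < α) (hα1 : α < 1) {a b : ℝ} (hbc : b ≤ c) :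
    (∫ s in a..b, (c - s) ^ (-α)) = ((c - a) ^ (1 - α) - (c - b) ^ (1 - α)) / (1 - α) := by
  rw [intervalIntegral.integral_comp_sub_left (fun x => x ^ (-α)) c,
    integral_rpow (Or.inl (by linarith))]
  norm_num [neg_add_eq_sub]

lemma L1aux_sum_Icc_one (f : ℕ → ℝ) (m : ℕ) :
    ∑ k ∈ Finset.Icc 1 (m+1), f k = ∑ k ∈ Finset.range (m+1), f (k+1) := by
  induction m with
  | zero => simp
  | succ p ih => rw [Finset.sum_Icc_succ_top (by omega), ih, Finset.sum_range_succ,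
      Finset.sum_range_succ, Finset.sum_range_succ]

set_option maxHeartbeats 1000000 in
/-- L1 remainder estimate on an arbitrary temporal mesh: for `0 < α < 1`, a mesh
`0 = t⁰ < t¹ < ⋯ < tᴺ = T` with largest step `Δmax`, and `v` twice continuously
differentiable, the L1 remainder `rⁿ` satisfies
`|rⁿ| ≤ ((Δtⁿ)²/(2(1−α)) + (Δmax)²/8) (Δtⁿ)^(−α) · max_{0≤s≤tⁿ} |v''(s)|`. -/
theorem L1_remainder_bound_general_mesh
    (α T : ℝ) (hα0 : 0 < α) (hα1 : α < 1) (hT : 0 < T)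
    (N : ℕ) (hN : 1 ≤ N)
    (t : ℕ → ℝ) (h0 : t 0 = 0) (hTN : t N = T)
    (hmono : ∀ m, 1 ≤ m → m ≤ N → t (m - 1) < t m)
    (Δmax : ℝ)
    (hΔmax : IsGreatest {d : ℝ | ∃ m, 1 ≤ m ∧ m ≤ N ∧ d = t m - t (m - 1)} Δmax)
    (v : ℝ → ℝ) (hv : ContDiff ℝ 2 v)
    (n : ℕ) (hn1 : 1 ≤ n) (hnN : n ≤ N)
    (M : ℝ)
    (hM : IsGreatest ((fun s => |deriv (deriv v) s|) '' Set.Icc 0 (t n)) M) :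
    |(∫ s in (0:ℝ)..t n, deriv v s * (t n - s) ^ (-α)) -
        ∑ k ∈ Finset.Icc 1 n,
          (v (t k) - v (t (k - 1))) / (t k - t (k - 1)) *
            ∫ s in t (k - 1)..t k, (t n - s) ^ (-α)| ≤
      ((t n - t (n - 1)) ^ 2 / (2 * (1 - α)) + Δmax ^ 2 / 8) *
        (t n - t (n - 1)) ^ (-α) * M := by
  obtain ⟨m, rfl⟩ : ∃ m, n = m + 1 := ⟨n - 1, (Nat.succ_pred_eq_of_pos hn1).symm⟩
  obtain ⟨hd1, hd2, hc2⟩ := L1aux_smooth hv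
  have hc1 : Continuous (deriv v) := hd2.continuous
  set c := t (m + 1) with hcdef
  have hmN : m + 1 ≤ N := hnN
  -- mesh monotonicity facts
  have hlt : ∀ k, k + 1 ≤ N → t k < t (k + 1) := by
    intro k hk
    have := hmono (k + 1) (by omega) hk
    simpa using this
  have hle : ∀ j, j ≤ N → ∀ i, i ≤ j → t i ≤ t j := by
    intro j hjN
    induction j with
    | zero =>
      intro i hi
      have hi0 : i = 0 := Nat.le_zero.mp hi
      rw [hi0]
    | succ p ih =>
      intro i hi
      rcases Nat.eq_or_lt_of_le hi with h | h
      · rw [h]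
      · have h1 : t i ≤ t p := ih (by omega) i (by omega)
        have h2 : t p < t (p + 1) := hlt p hjN
        linarith
  have htm_lt : t m < c := hlt m hmN
  have htm0 : 0 ≤ t m := by
    have := hle m (by omega) 0 (Nat.zero_le m); rw [h0] at this; exact this
  have hc0 : 0 < c := lt_of_le_of_lt htm0 htm_lt
  have hM' : ∀ u ∈ Set.Icc 0 c, |deriv (deriv v) u| ≤ M := fun u hu => hM.2 ⟨u, hu, rfl⟩
  have hM0 : 0 ≤ M := le_trans (abs_nonneg _) (hM' 0 ⟨le_rfl, hc0.le⟩)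
  have hD : 0 < c - t m := by linarith
  have hDm : c - t m ≤ Δmax := hΔmax.2 ⟨m + 1, by omega, hmN, by simp [hcdef]⟩
  have hΔmax0 : 0 < Δmax := lt_of_lt_of_le hD hDm
  -- integrability
  have Iw : ∀ a b : ℝ, IntervalIntegrable (fun s => (c - s) ^ (-α)) volume a b :=
    fun a b => L1aux_Iw (by linarith) a b
  have Ivw : ∀ a b : ℝ, IntervalIntegrable (fun s => deriv v s * (c - s) ^ (-α)) volume a b :=
    fun a b => (Iw a b).continuousOn_mul hc1.continuousOn
  -- notation
  set δ : ℕ → ℝ := fun k => (v (t (k + 1)) - v (t k)) / (t (k + 1) - t k) with hδdef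
  set E : ℕ → ℝ := fun k =>
    (∫ s in t k..t (k + 1), deriv v s * (c - s) ^ (-α)) -
      δ k * ∫ s in t k..t (k + 1), (c - s) ^ (-α) with hEdef
  -- Step A : rewrite the quantity inside the absolute value
  have hsum1 : (∫ s in (0:ℝ)..c, deriv v s * (c - s) ^ (-α))
      = ∑ k ∈ Finset.range (m + 1), ∫ s in t k..t (k + 1), deriv v s * (c - s) ^ (-α) := by
    rw [intervalIntegral.sum_integral_adjacent_intervals (fun k _ => Ivw _ _), h0]
  have hsum2 : (∑ k ∈ Finset.Icc 1 (m + 1),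
        (v (t k) - v (t (k - 1))) / (t k - t (k - 1)) * ∫ s in t (k - 1)..t k, (c - s) ^ (-α))
      = ∑ k ∈ Finset.range (m + 1), δ k * ∫ s in t k..t (k + 1), (c - s) ^ (-α) := by
    rw [L1aux_sum_Icc_one]
    exact Finset.sum_congr rfl fun k _ => by simp [hδdef]
  have hAeq : (∫ s in (0:ℝ)..c, deriv v s * (c - s) ^ (-α)) -
      (∑ k ∈ Finset.Icc 1 (m + 1),
        (v (t k) - v (t (k - 1))) / (t k - t (k - 1)) * ∫ s in t (k - 1)..t k, (c - s) ^ (-α))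
      = ∑ k ∈ Finset.range (m + 1), E k := by
    rw [hsum1, hsum2, ← Finset.sum_sub_distrib]
  -- Step B : interior intervals
  have hint : ∀ k, k < m → |E k| ≤
      M * Δmax ^ 2 / 8 * ((c - t (k + 1)) ^ (-α) - (c - t k) ^ (-α)) := by
    intro k hk
    have hkN : k + 1 ≤ N := by omega
    have hab : t k < t (k + 1) := hlt k hkN
    have hbc : t (k + 1) < c := by
      have h1 : t (k + 1) ≤ t m := hle m (by omega) (k + 1) (by omega)
      linarith
    have hba : t (k + 1) - t k ≤ Δmax := hΔmax.2 ⟨k + 1, by omega, hkN, by simp⟩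
    set a := t k with hadef
    set b := t (k + 1) with hbdef
    set e : ℝ → ℝ := fun s => v s - v a - δ k * (s - a) with hedef
    -- derivative facts for w and e on [a,b]
    have hw' : ∀ x ∈ Set.uIcc a b, HasDerivAt (fun s => (c - s) ^ (-α))
        (α * (c - x) ^ (-α - 1)) x := by
      intro x hx
      rw [Set.uIcc_of_le hab.le] at hx
      have hcx : 0 < c - x := by linarith [hx.2]
      have h1 : HasDerivAt (fun s : ℝ => c - s) (-1) x := (hasDerivAt_id x).const_sub c
      have h2 := (Real.hasDerivAt_rpow_const (x := c - x) (p := -α) (Or.inl hcx.ne')).comp x h1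
      exact h2.congr_deriv (by ring)
    have he' : ∀ x ∈ Set.uIcc a b, HasDerivAt e (deriv v x - δ k) x := by
      intro x _
      have h1 : HasDerivAt (fun s => δ k * (s - a)) (δ k * 1) x :=
        ((hasDerivAt_id x).sub_const a).const_mul (δ k)
      have h2 := ((hd1 x).hasDerivAt.sub_const (v a)).sub h1
      exact h2.congr_deriv (by ring)
    have hw'cont : ContinuousOn (fun x => α * (c - x) ^ (-α - 1)) (Set.uIcc a b) := by
      refine continuousOn_const.mul (ContinuousOn.rpow_const
        (continuousOn_const.sub continuousOn_id) fun x hx => ?_)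
      rw [Set.uIcc_of_le hab.le] at hx
      have hcx : 0 < c - x := by linarith [hx.2]
      exact Or.inl hcx.ne'
    have hIBP := intervalIntegral.integral_mul_deriv_eq_deriv_mul
      (a := a) (b := b)
      (u := fun s => (c - s) ^ (-α)) (v := e)
      (u' := fun x => α * (c - x) ^ (-α - 1)) (v' := fun x => deriv v x - δ k)
      hw' he' (hw'cont.intervalIntegrable) ((hc1.sub continuous_const).intervalIntegrable _ _)
    have hδk : δ k = (v b - v a) / (b - a) := rfl
    have hea : e a = 0 := by simp [hedef]
    have heb : e b = 0 := by
      have hne : b - a ≠ 0 := ne_of_gt (by linarith)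
      simp only [hedef, hδk]
      rw [div_mul_cancel₀ _ hne]
      ring
    have hEk : E k = -∫ x in a..b, α * (c - x) ^ (-α - 1) * e x := by
      have h1 : (∫ s in a..b, (c - s) ^ (-α) * (deriv v s - δ k)) = E k := by
        rw [hEdef]
        simp only
        rw [← intervalIntegral.integral_const_mul,
          ← intervalIntegral.integral_sub (Ivw a b) ((Iw a b).const_mul _)]
        exact intervalIntegral.integral_congr fun x _ => by ring
      rw [← h1, hIBP, hea, heb]
      ring
    -- positivity of w' on the interval and the interpolation bound
    have hbnd : |∫ x in a..b, α * (c - x) ^ (-α - 1) * e x|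
        ≤ M * Δmax ^ 2 / 8 * ((c - b) ^ (-α) - (c - a) ^ (-α)) := by
      have hFTC : (∫ x in a..b, α * (c - x) ^ (-α - 1))
          = (c - b) ^ (-α) - (c - a) ^ (-α) :=
        integral_eq_sub_of_hasDerivAt hw' hw'cont.intervalIntegrable
      have h := intervalIntegral.norm_integral_le_of_norm_le (μ := volume)
        (f := fun x => α * (c - x) ^ (-α - 1) * e x)
        (g := fun x => M * Δmax ^ 2 / 8 * (α * (c - x) ^ (-α - 1)))
        (a := a) (b := b) ?_ ?_ ?_
      · have hval : (∫ x in a..b, M * Δmax ^ 2 / 8 * (α * (c - x) ^ (-α - 1)))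
            = M * Δmax ^ 2 / 8 * ((c - b) ^ (-α) - (c - a) ^ (-α)) := by
          rw [intervalIntegral.integral_const_mul, hFTC]
        rw [hval] at h
        have hmono_w : (c - a) ^ (-α) ≤ (c - b) ^ (-α) :=
          Real.rpow_le_rpow_of_nonpos (by linarith) (by linarith) (by linarith)
        exact h
      · exact hab.le
      · filter_upwards with x hx
        have hxa : a < x := hx.1
        have hxb : x ≤ b := hx.2
        have hcx : 0 < c - x := by linarith
        have hw'pos : 0 ≤ α * (c - x) ^ (-α - 1) := by positivity
        have hEbound : |e x| ≤ M * Δmax ^ 2 / 8 := by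
          have hMab : ∀ u ∈ Set.Icc a b, |deriv (deriv v) u| ≤ M := by
            intro u hu
            refine hM' u ⟨?_, ?_⟩
            · have : 0 ≤ a := by
                have := hle k (by omega) 0 (Nat.zero_le k); rw [h0] at this; exact this
              linarith [hu.1]
            · linarith [hu.2]
          have hx' : x ∈ Set.Icc a b := ⟨hxa.le, hxb⟩
          have h1 := L1aux_interp_err hv hab hMab hx'
          have h2 : e x = v x - (v a + (v b - v a) / (b - a) * (x - a)) := by
            simp only [hedef, hδk]
            ring
          rw [h2]
          refine h1.trans ?_
          have : (b - a) ^ 2 ≤ Δmax ^ 2 := by nlinarith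
          nlinarith
        calc ‖α * (c - x) ^ (-α - 1) * e x‖
            = α * (c - x) ^ (-α - 1) * |e x| := by
              rw [Real.norm_eq_abs, abs_mul, abs_of_nonneg hw'pos]
          _ ≤ (α * (c - x) ^ (-α - 1)) * (M * Δmax ^ 2 / 8) := by
              exact mul_le_mul_of_nonneg_left hEbound hw'pos
          _ = M * Δmax ^ 2 / 8 * (α * (c - x) ^ (-α - 1)) := by ring
      · exact (hw'cont.intervalIntegrable).const_mul _
    rw [hEk, abs_neg]
    exact hbnd
  -- Step C : last interval
  have hlast : |E m| ≤ M * (c - t m) / 2 * ((c - t m) ^ (1 - α) / (1 - α)) := by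
    have hab : t m < c := htm_lt
    have hEm : E m = ∫ s in t m..c, (deriv v s - δ m) * (c - s) ^ (-α) := by
      rw [hEdef]
      simp only
      rw [← intervalIntegral.integral_const_mul,
        ← intervalIntegral.integral_sub (Ivw _ _) ((Iw _ _).const_mul _)]
      exact (intervalIntegral.integral_congr fun x _ => by ring).symm
    have hMab : ∀ u ∈ Set.Icc (t m) c, |deriv (deriv v) u| ≤ M := fun u hu =>
      hM' u ⟨le_trans htm0 hu.1, hu.2⟩
    rw [hEm]
    have h := intervalIntegral.norm_integral_le_of_norm_le (μ := volume)
      (f := fun s => (deriv v s - δ m) * (c - s) ^ (-α))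
      (g := fun s => M * (c - t m) / 2 * (c - s) ^ (-α))
      (a := t m) (b := c) ?_ ?_ ?_
    · have hval : (∫ s in t m..c, M * (c - t m) / 2 * (c - s) ^ (-α))
          = M * (c - t m) / 2 * ((c - t m) ^ (1 - α) / (1 - α)) := by
        rw [intervalIntegral.integral_const_mul, L1aux_intw hα0 hα1 le_rfl]
        rw [sub_self, Real.zero_rpow (by linarith : (1:ℝ) - α ≠ 0)]
        ring
      rw [hval] at h
      have hnn : 0 ≤ M * (c - t m) / 2 * ((c - t m) ^ (1 - α) / (1 - α)) := by
        have h1 : 0 ≤ (c - t m) ^ (1 - α) := Real.rpow_nonneg hD.le _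
        have h2 : (0:ℝ) < 1 - α := by linarith
        have h3 : 0 ≤ M * (c - t m) / 2 := by nlinarith [hM0, hD.le]
        exact mul_nonneg h3 (div_nonneg h1 h2.le)
      exact h
    · exact hab.le
    · filter_upwards with x hx
      have hwx : 0 ≤ (c - x) ^ (-α) := Real.rpow_nonneg (by linarith [hx.2]) _
      have hsl : |deriv v x - δ m| ≤ M * (c - t m) / 2 := by
        have := L1aux_slope_err hv hab hMab (s := x) ⟨hx.1.le, hx.2⟩
        simpa [hδdef, hcdef] using this
      calc ‖(deriv v x - δ m) * (c - x) ^ (-α)‖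
          = |deriv v x - δ m| * (c - x) ^ (-α) := by
            rw [Real.norm_eq_abs, abs_mul, abs_of_nonneg hwx]
        _ ≤ M * (c - t m) / 2 * (c - x) ^ (-α) :=
            mul_le_mul_of_nonneg_right hsl hwx
    · exact (Iw _ _).const_mul _
  -- Step D : assemble
  have htelesc : ∑ k ∈ Finset.range m,
      (M * Δmax ^ 2 / 8 * ((c - t (k + 1)) ^ (-α) - (c - t k) ^ (-α)))
      = M * Δmax ^ 2 / 8 * ((c - t m) ^ (-α) - (c - t 0) ^ (-α)) := by
    rw [← Finset.mul_sum, Finset.sum_range_sub (f := fun k => (c - t k) ^ (-α))]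
  have hsum_int : ∑ k ∈ Finset.range m, |E k| ≤ M * Δmax ^ 2 / 8 * (c - t m) ^ (-α) := by
    calc ∑ k ∈ Finset.range m, |E k|
        ≤ ∑ k ∈ Finset.range m,
            (M * Δmax ^ 2 / 8 * ((c - t (k + 1)) ^ (-α) - (c - t k) ^ (-α))) :=
          Finset.sum_le_sum fun k hk => hint k (Finset.mem_range.mp hk)
      _ = M * Δmax ^ 2 / 8 * ((c - t m) ^ (-α) - (c - t 0) ^ (-α)) := htelesc
      _ ≤ M * Δmax ^ 2 / 8 * (c - t m) ^ (-α) := by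
          have h1 : 0 ≤ (c - t 0) ^ (-α) := Real.rpow_nonneg (by rw [h0]; linarith) _
          have h2 : 0 ≤ M * Δmax ^ 2 / 8 := by positivity
          nlinarith
  have hfinal : |∑ k ∈ Finset.range (m + 1), E k|
      ≤ M * Δmax ^ 2 / 8 * (c - t m) ^ (-α)
        + M * (c - t m) / 2 * ((c - t m) ^ (1 - α) / (1 - α)) := by
    rw [Finset.sum_range_succ]
    calc |∑ k ∈ Finset.range m, E k + E m|
        ≤ |∑ k ∈ Finset.range m, E k| + |E m| := abs_add_le _ _
      _ ≤ (∑ k ∈ Finset.range m, |E k|) + |E m| :=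
          add_le_add (Finset.abs_sum_le_sum_abs _ _) le_rfl
      _ ≤ _ := add_le_add hsum_int hlast
  -- final algebra
  have hsimp : t (m + 1 - 1) = t m := by norm_num
  rw [hsimp]
  have hgoal_eq : (∫ s in (0:ℝ)..c, deriv v s * (c - s) ^ (-α)) -
      (∑ k ∈ Finset.Icc 1 (m + 1),
        (v (t k) - v (t (k - 1))) / (t k - t (k - 1)) * ∫ s in t (k - 1)..t k, (c - s) ^ (-α))
      = ∑ k ∈ Finset.range (m + 1), E k := hAeq
  rw [hgoal_eq]
  refine hfinal.trans ?_
  have hpow : (c - t m) ^ (1 - α) = (c - t m) * (c - t m) ^ (-α) := by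
    rw [show (1:ℝ) - α = 1 + (-α) by ring, Real.rpow_add hD, Real.rpow_one]
  rw [hpow]
  have h1α : (0:ℝ) < 1 - α := by linarith
  have heq : M * Δmax ^ 2 / 8 * (c - t m) ^ (-α)
      + M * (c - t m) / 2 * ((c - t m) * (c - t m) ^ (-α) / (1 - α))
      = ((c - t m) ^ 2 / (2 * (1 - α)) + Δmax ^ 2 / 8) * (c - t m) ^ (-α) * M := by
    field_simp
    ring
  exact le_of_eq heq
end

section
/- Let 0 < α < 1, let T > 0, let N ≥ 2 be an integer, and consider the special quasi-uniform mesh on [0,T]. Let v : [0,T] → ℝ be twice continuously differentiable. Then for every 1 ≤ n ≤ N − 1 the L1 remainder satisfies |r^n| ≤ ( 1 + α + 2^{1−α}/(1−α) ) · max_{0 ≤ t ≤ t^n} |v''(t)| · T^{2−α} (N+1)^{α−2}. -/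
open Real MeasureTheory intervalIntegral Set

lemma qu_deriv_lip (v : ℝ → ℝ) (hv : ContDiff ℝ 2 v) {B M : ℝ}
    (hM : ∀ x ∈ Icc (0:ℝ) B, |deriv (deriv v) x| ≤ M)
    {s u : ℝ} (hs : s ∈ Icc (0:ℝ) B) (hu : u ∈ Icc (0:ℝ) B) :
    |deriv v s - deriv v u| ≤ M * |s - u| := by
  have h2 : ContDiff ℝ (1+1) v := by
    rw [show ((1:WithTop ℕ∞)+1) = 2 by norm_num]; exact hv
  have hd : Differentiable ℝ (deriv v) :=
    (contDiff_one_iff_deriv.mp (contDiff_succ_iff_deriv.mp h2).2.2).1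
  have := (convex_Icc (0:ℝ) B).norm_image_sub_le_of_norm_deriv_le
    (f := deriv v) (fun x _ => hd x) (fun x hx => by simpa using hM x hx) hu hs
  simpa [Real.norm_eq_abs] using this

lemma qu_int_left (a c : ℝ) : ∫ u in a..c, (c - u) = (c-a)^2/2 := by
  have := intervalIntegral.integral_comp_sub_left (a := a) (b := c) (fun x => x) c
  simp only [sub_self] at this
  rw [this, integral_id]; ring

lemma qu_int_right (c b : ℝ) : ∫ u in c..b, (u - c) = (b-c)^2/2 := by
  have := intervalIntegral.integral_comp_sub_right (a := c) (b := b) (fun x => x) c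
  simp only [sub_self] at this
  rw [this, integral_id]; ring

lemma qu_int_rpow {r : ℝ} (hr : -1 < r) (a b : ℝ) :
    ∫ s in a..b, (b - s)^r = (b-a)^(r+1)/(r+1) := by
  have := intervalIntegral.integral_comp_sub_left (a := a) (b := b) (fun x => x^r) b
  simp only [sub_self] at this
  rw [this, integral_rpow (Or.inl hr), Real.zero_rpow (by linarith)]
  ring

lemma qu_abs_int (a b' s : ℝ) (hs : s ∈ Icc a b') :
    ∫ u in a..b', |s - u| = ((s-a)^2 + (b'-s)^2)/2 := by
  obtain ⟨h1, h2⟩ := hs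
  have hsplit : (∫ u in a..s, |s - u|) + (∫ u in s..b', |s - u|) = ∫ u in a..b', |s - u| := by
    apply intervalIntegral.integral_add_adjacent_intervals <;>
      exact (continuous_const.sub continuous_id).abs.intervalIntegrable _ _
  rw [← hsplit]
  have e1 : (∫ u in a..s, |s - u|) = ∫ u in a..s, (s - u) := by
    apply intervalIntegral.integral_congr
    intro u hu
    rw [Set.uIcc_of_le h1] at hu
    exact abs_of_nonneg (by linarith [hu.2])
  have e2 : (∫ u in s..b', |s - u|) = ∫ u in s..b', (u - s) := by
    apply intervalIntegral.integral_congr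
    intro u hu
    rw [Set.uIcc_of_le h2] at hu
    show |s - u| = u - s
    rw [abs_sub_comm]
    exact abs_of_nonneg (by linarith [hu.1])
  rw [e1, e2, qu_int_left, qu_int_right]; ring

lemma qu_slope_dev (v : ℝ → ℝ) (hv : ContDiff ℝ 2 v) {B M : ℝ}
    (hM : ∀ x ∈ Icc (0:ℝ) B, |deriv (deriv v) x| ≤ M)
    {a b' : ℝ} (hab : a < b') (h0 : 0 ≤ a) (hB : b' ≤ B)
    {s : ℝ} (hs : s ∈ Icc a b') :
    |deriv v s - (v b' - v a)/(b' - a)| ≤ M * ((s-a)^2 + (b'-s)^2) / (2*(b'-a)) := by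
  have hd : Differentiable ℝ v := hv.differentiable (by norm_num)
  have hc : Continuous (deriv v) := hv.continuous_deriv (by norm_num)
  have hftc : ∫ u in a..b', deriv v u = v b' - v a :=
    intervalIntegral.integral_deriv_eq_sub (fun x _ => hd x)
      (hc.intervalIntegrable _ _)
  have hsub : Icc a b' ⊆ Icc (0:ℝ) B := Icc_subset_Icc h0 hB
  have hkey : |deriv v s * (b' - a) - (v b' - v a)| ≤ M * ((s-a)^2 + (b'-s)^2)/2 := by
    have heq : deriv v s * (b' - a) - (v b' - v a)
        = ∫ u in a..b', (deriv v s - deriv v u) := by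
      rw [intervalIntegral.integral_sub (intervalIntegrable_const)
        (hc.intervalIntegrable _ _), hftc]
      simp [mul_comm]
    rw [heq]
    have hb : |∫ u in a..b', (deriv v s - deriv v u)| ≤ abs (∫ u in a..b', M * |s - u|) := by
      rw [show |∫ u in a..b', (deriv v s - deriv v u)| = ‖∫ u in a..b', (deriv v s - deriv v u)‖ from rfl]
      apply intervalIntegral.norm_integral_le_abs_of_norm_le
      · apply MeasureTheory.ae_restrict_of_forall_mem measurableSet_uIoc
        intro u hu
        have hu' : u ∈ Icc a b' := by
          rw [Set.uIoc_of_le hab.le] at hu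
          exact ⟨hu.1.le, hu.2⟩
        simpa [Real.norm_eq_abs] using qu_deriv_lip v hv hM (hsub hs) (hsub hu')
      · exact (continuous_const.mul (continuous_const.sub continuous_id).abs).intervalIntegrable _ _
    calc |∫ u in a..b', (deriv v s - deriv v u)| ≤ abs (∫ u in a..b', M * |s - u|) := hb
      _ = M * ((s-a)^2 + (b'-s)^2)/2 := by
          rw [intervalIntegral.integral_const_mul, qu_abs_int a b' s hs, abs_of_nonneg]
          · ring
          · have hM0 : 0 ≤ M := le_trans (abs_nonneg _) (hM 0 ⟨le_rfl, by linarith⟩)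
            positivity
  have hpos : 0 < b' - a := by linarith
  rw [show deriv v s - (v b' - v a)/(b' - a)
      = (deriv v s * (b' - a) - (v b' - v a))/(b' - a) by field_simp]
  rw [abs_div, abs_of_pos hpos, div_le_iff₀ hpos]
  calc |deriv v s * (b' - a) - (v b' - v a)| ≤ M * ((s-a)^2 + (b'-s)^2)/2 := hkey
    _ = M * ((s-a)^2 + (b'-s)^2) / (2*(b'-a)) * (b' - a) := by field_simp

lemma qu_x_mul_rpow {x r : ℝ} (hx : 0 ≤ x) (hr : r + 1 ≠ 0) : x * x^r = x^(r+1) := by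
  rcases hx.eq_or_lt with h | h
  · rw [← h, Real.zero_rpow hr, mul_comm, mul_zero]
  · nth_rewrite 1 [← Real.rpow_one x]
    rw [← Real.rpow_add h]; ring_nf

lemma qu_K_integrable {α : ℝ} (hα0 : -1 < α) (a B : ℝ) :
    IntervalIntegrable (fun s => (B - s)^α) MeasureTheory.volume a B := by
  have h := intervalIntegral.intervalIntegrable_rpow' (a := B - a) (b := 0) hα0
  have := h.comp_sub_left B
  simpa using this

lemma qu_K_int {α : ℝ} (hα0 : -1 < α) {a B : ℝ} :
    ∫ s in a..B, (B - s)^α = (B-a)^(α+1)/(α+1) := by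
  have := intervalIntegral.integral_comp_sub_left (a := a) (b := B) (fun x => x^α) B
  simp only [sub_self] at this
  rw [this, integral_rpow (Or.inl hα0), Real.zero_rpow (by linarith)]
  ring

lemma qu_last_bound (α : ℝ) (hα0 : 0 < α) (hα1 : α < 1)
    (v : ℝ → ℝ) (hv : ContDiff ℝ 2 v) {B M : ℝ}
    (hM : ∀ x ∈ Icc (0:ℝ) B, |deriv (deriv v) x| ≤ M) (hM0 : 0 ≤ M)
    {a : ℝ} (h0a : 0 ≤ a) (hab : a < B) :
    |(∫ s in a..B, deriv v s * (B - s)^(-α)) -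
      (v B - v a)/(B - a) * ∫ s in a..B, (B - s)^(-α)|
      ≤ M/2 * (B-a)^(2-α) * (1-α)⁻¹ := by
  set Δ := B - a with hΔ
  have hΔ0 : 0 < Δ := by simp [hΔ]; linarith
  have hc : Continuous (deriv v) := hv.continuous_deriv (by norm_num)
  set L := (v B - v a)/(B - a) with hL
  have hK : IntervalIntegrable (fun s => (B - s)^(-α)) volume a B :=
    qu_K_integrable (by linarith) a B
  have hvK : IntervalIntegrable (fun s => deriv v s * (B - s)^(-α)) volume a B :=
    hK.continuousOn_mul hc.continuousOn
  -- rewrite difference as single integral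
  have hdiff : (∫ s in a..B, deriv v s * (B - s)^(-α)) - L * ∫ s in a..B, (B - s)^(-α)
      = ∫ s in a..B, (deriv v s - L) * (B - s)^(-α) := by
    rw [← intervalIntegral.integral_const_mul,
      ← intervalIntegral.integral_sub hvK (hK.const_mul L)]
    congr 1; ext s; ring
  rw [hdiff]
  -- the dominating function
  set g : ℝ → ℝ := fun s => M/(2*Δ) * (((s-a)^2 + (B-s)^2) * (B-s)^(-α)) with hg
  have hgint : IntervalIntegrable g volume a B := by
    apply IntervalIntegrable.const_mul
    apply hK.continuousOn_mul
    exact (continuous_id.sub continuous_const).pow 2 |>.add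
      ((continuous_const.sub continuous_id).pow 2) |>.continuousOn
  have hbound : |∫ s in a..B, (deriv v s - L) * (B - s)^(-α)| ≤ abs (∫ s in a..B, g s) := by
    rw [show |∫ s in a..B, (deriv v s - L) * (B - s)^(-α)|
      = ‖∫ s in a..B, (deriv v s - L) * (B - s)^(-α)‖ from rfl]
    apply intervalIntegral.norm_integral_le_abs_of_norm_le _ hgint
    apply MeasureTheory.ae_restrict_of_forall_mem measurableSet_uIoc
    intro s hsI
    have hs : s ∈ Icc a B := by
      rw [Set.uIoc_of_le hab.le] at hsI; exact ⟨hsI.1.le, hsI.2⟩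
    have hKnn : 0 ≤ (B - s)^(-α) := Real.rpow_nonneg (by linarith [hs.2]) _
    rw [Real.norm_eq_abs, abs_mul, abs_of_nonneg hKnn, hg]
    have := qu_slope_dev v hv hM hab h0a le_rfl hs
    calc |deriv v s - L| * (B-s)^(-α)
        ≤ (M * ((s-a)^2 + (B-s)^2) / (2*Δ)) * (B-s)^(-α) :=
          mul_le_mul_of_nonneg_right this hKnn
      _ = M/(2*Δ) * (((s-a)^2 + (B-s)^2) * (B-s)^(-α)) := by ring
  -- compute ∫ g
  have hcongr : ∀ s ∈ Set.uIcc a B,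
      g s = M/(2*Δ) * (Δ^2 * (B-s)^(-α)) - M/(2*Δ) * (2*Δ * (B-s)^(-α+1))
        + M/(2*Δ) * (2 * (B-s)^(-α+2)) := by
    intro s hs
    rw [Set.uIcc_of_le hab.le] at hs
    have hx : (0:ℝ) ≤ B - s := by linarith [hs.2]
    have e1 : (B-s) * (B-s)^(-α) = (B-s)^(-α+1) := qu_x_mul_rpow hx (by linarith)
    have e2 : (B-s)^2 * (B-s)^(-α) = (B-s)^(-α+2) := by
      have : (B-s) * (B-s)^(-α+1) = (B-s)^(-α+1+1) := qu_x_mul_rpow hx (by linarith)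
      rw [show (-α+2) = -α+1+1 by ring, ← this, ← e1]; ring
    have : (s-a)^2 = Δ^2 - 2*Δ*(B-s) + (B-s)^2 := by rw [hΔ]; ring
    rw [hg]; dsimp only
    rw [this]
    rw [show (Δ^2 - 2*Δ*(B-s) + (B-s)^2 + (B-s)^2) * (B-s)^(-α)
      = Δ^2 * (B-s)^(-α) - 2*Δ*((B-s) * (B-s)^(-α)) + 2*((B-s)^2 * (B-s)^(-α)) by ring]
    rw [e1, e2]; ring
  have hint1 : IntervalIntegrable (fun s => (B - s)^(-α+1)) volume a B :=
    qu_K_integrable (by linarith) a B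
  have hint2 : IntervalIntegrable (fun s => (B - s)^(-α+2)) volume a B :=
    qu_K_integrable (by linarith) a B
  have hval : (∫ s in a..B, g s)
      = M/(2*Δ) * (Δ^2 * (Δ^(1-α)/(1-α))) - M/(2*Δ) * (2*Δ * (Δ^(2-α)/(2-α)))
        + M/(2*Δ) * (2 * (Δ^(3-α)/(3-α))) := by
    rw [intervalIntegral.integral_congr hcongr]
    rw [intervalIntegral.integral_add (((hK.const_mul _).const_mul _).sub
        ((hint1.const_mul _).const_mul _)) ((hint2.const_mul _).const_mul _),
      intervalIntegral.integral_sub ((hK.const_mul _).const_mul _)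
        ((hint1.const_mul _).const_mul _)]
    rw [intervalIntegral.integral_const_mul, intervalIntegral.integral_const_mul,
      intervalIntegral.integral_const_mul, intervalIntegral.integral_const_mul,
      intervalIntegral.integral_const_mul, intervalIntegral.integral_const_mul]
    rw [qu_K_int (by linarith : (-1:ℝ) < -α), qu_K_int (by linarith : (-1:ℝ) < -α+1),
      qu_K_int (by linarith : (-1:ℝ) < -α+2)]
    norm_num [hΔ]
    ring_nf
  -- simplify the value
  have h1α : (1:ℝ) - α ≠ 0 := by linarith
  have h2α : (2:ℝ) - α ≠ 0 := by linarith
  have h3α : (3:ℝ) - α ≠ 0 := by linarith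
  clear_value g
  set P := Δ^(1-α) with hP
  have hP0 : 0 ≤ P := Real.rpow_nonneg hΔ0.le _
  have h2 : Δ * P = Δ^(2-α) := by
    rw [hP, qu_x_mul_rpow hΔ0.le (by linarith), show (1:ℝ)-α+1 = 2-α by ring]
  have h3 : Δ * (Δ * P) = Δ^(3-α) := by
    rw [h2, qu_x_mul_rpow hΔ0.le (by linarith), show (2:ℝ)-α+1 = 3-α by ring]
  clear_value P Δ
  have hval2 : (∫ s in a..B, g s)
      = M/2 * (Δ*P) * (1/(1-α) - 2/(2-α) + 2/(3-α)) := by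
    rw [hval, ← h2, ← h3]
    have hΔne : Δ ≠ 0 := ne_of_gt hΔ0
    field_simp
    try ring
  have hbr0 : (0:ℝ) ≤ 1/(1-α) - 2/(2-α) + 2/(3-α) := by
    have h1 : 2/(2-α) ≤ 1/(1-α) := by
      rw [div_le_div_iff₀ (by linarith) (by linarith)]; nlinarith
    have h2' : (0:ℝ) < 2/(3-α) := div_pos (by norm_num) (by linarith)
    linarith
  have hbr1 : 1/(1-α) - 2/(2-α) + 2/(3-α) ≤ 1/(1-α) := by
    have : 2/(3-α) ≤ 2/(2-α) := by
      rw [div_le_div_iff₀ (by linarith) (by linarith)]; nlinarith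
    linarith
  have hnn : 0 ≤ M/2 * (Δ*P) := by positivity
  calc |∫ s in a..B, (deriv v s - L) * (B - s)^(-α)| ≤ abs (∫ s in a..B, g s) := hbound
    _ = M/2 * (Δ*P) * (1/(1-α) - 2/(2-α) + 2/(3-α)) := by
        rw [hval2, abs_of_nonneg (mul_nonneg hnn hbr0)]
    _ ≤ M/2 * (Δ*P) * (1/(1-α)) := mul_le_mul_of_nonneg_left hbr1 hnn
    _ = M/2 * (Δ*P) * (1-α)⁻¹ := by rw [one_div]
    _ = M/2 * Δ^(2-α) * (1-α)⁻¹ := by rw [h2]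

lemma qu_inner_bound (α : ℝ) (hα0 : 0 < α) (hα1 : α < 1)
    (v : ℝ → ℝ) (hv : ContDiff ℝ 2 v) {B M : ℝ}
    (hM : ∀ x ∈ Icc (0:ℝ) B, |deriv (deriv v) x| ≤ M) (hM0 : 0 ≤ M)
    {a b' : ℝ} (h0a : 0 ≤ a) (hab : a < b') (hb'B : b' < B) :
    |(∫ s in a..b', deriv v s * (B - s)^(-α)) -
      (v b' - v a)/(b' - a) * ∫ s in a..b', (B - s)^(-α)|
      ≤ α/8 * M * (b'-a)^3 * (B-b')^(-1-α) := by
  set Δ := b' - a with hΔ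
  have hΔ0 : 0 < Δ := by simp [hΔ]; linarith
  have hd : Differentiable ℝ v := hv.differentiable (by norm_num)
  have hc : Continuous (deriv v) := hv.continuous_deriv (by norm_num)
  set L := (v b' - v a)/(b' - a) with hL
  set K : ℝ → ℝ := fun s => (B - s)^(-α) with hK
  set m : ℝ := (a + b')/2 with hm
  have ham : a < m := by rw [hm]; linarith
  have hmb : m < b' := by rw [hm]; linarith
  -- derivative of K
  have hKd : ∀ x ∈ Icc a b', HasDerivAt K (α*(B-x)^(-α-1)) x := by
    intro x hx
    have hBx : 0 < B - x := by linarith [hx.2]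
    have h1 : HasDerivAt (fun u : ℝ => u^(-α)) (-α*(B-x)^(-α-1)) (B-x) :=
      Real.hasDerivAt_rpow_const (Or.inl (ne_of_gt hBx))
    have h2 : HasDerivAt (fun s : ℝ => B - s) (-1) x := (hasDerivAt_id x).const_sub B
    have := h1.comp x h2
    exact this.congr_deriv (by ring)
  have hKc : ContinuousOn K (Icc a b') := fun x hx =>
    (hKd x hx).continuousAt.continuousWithinAt
  set C := α*(B-b')^(-α-1) with hC
  have hC0 : 0 ≤ C := mul_nonneg hα0.le (Real.rpow_nonneg (by linarith) _)
  have hKlip : ∀ s ∈ Icc a b', ∀ u ∈ Icc a b', |K s - K u| ≤ C * |s - u| := by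
    intro s hs u hu
    have := (convex_Icc a b').norm_image_sub_le_of_norm_deriv_le
      (f := K) (C := C) (fun x hx => (hKd x hx).differentiableAt)
      (fun x hx => by
        rw [(hKd x hx).deriv, hC, Real.norm_eq_abs,
          abs_of_nonneg (mul_nonneg hα0.le (Real.rpow_nonneg (by linarith [hx.2]) _))]
        apply mul_le_mul_of_nonneg_left _ hα0.le
        apply Real.rpow_le_rpow_of_nonpos (by linarith) (by linarith [hx.2]) (by linarith))
      hu hs
    simpa [Real.norm_eq_abs] using this
  -- slope deviation crude bound
  have hsd : ∀ s ∈ Icc a b', |deriv v s - L| ≤ M*Δ/2 := by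
    intro s hs
    have h1 := qu_slope_dev v hv hM hab h0a hb'B.le hs
    have h2 : (s-a)^2 + (b'-s)^2 ≤ Δ^2 := by
      obtain ⟨hs1, hs2⟩ := hs; rw [hΔ]; nlinarith
    calc |deriv v s - L| ≤ M * ((s-a)^2 + (b'-s)^2) / (2*Δ) := h1
      _ ≤ M * Δ^2 / (2*Δ) := by gcongr
      _ = M*Δ/2 := by rw [hΔ]; field_simp
  -- zero mean
  have hftc : ∫ u in a..b', deriv v u = v b' - v a :=
    intervalIntegral.integral_deriv_eq_sub (fun x _ => hd x) (hc.intervalIntegrable _ _)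
  have hzero : ∫ s in a..b', (deriv v s - L) = 0 := by
    rw [intervalIntegral.integral_sub (hc.intervalIntegrable _ _) intervalIntegrable_const,
      hftc, intervalIntegral.integral_const, smul_eq_mul, hL]
    field_simp
    rw [div_self (sub_pos.mpr hab).ne']; ring
  -- the integrand
  set f : ℝ → ℝ := fun s => (deriv v s - L) * (K s - K m) with hf
  have hfc : ContinuousOn f (Icc a b') :=
    (hc.continuousOn.sub continuousOn_const).mul (hKc.sub continuousOn_const)
  have hsub1 : Set.uIcc a m ⊆ Icc a b' := by
    rw [Set.uIcc_of_le ham.le]; exact Icc_subset_Icc le_rfl hmb.le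
  have hsub2 : Set.uIcc m b' ⊆ Icc a b' := by
    rw [Set.uIcc_of_le hmb.le]; exact Icc_subset_Icc ham.le le_rfl
  have hint1 : IntervalIntegrable f volume a m := (hfc.mono hsub1).intervalIntegrable
  have hint2 : IntervalIntegrable f volume m b' := (hfc.mono hsub2).intervalIntegrable
  have hKint : IntervalIntegrable K volume a b' :=
    (hKc.mono (Set.uIcc_of_le hab.le).subset).intervalIntegrable
  have hvKint : IntervalIntegrable (fun s => deriv v s * K s) volume a b' :=
    hKint.continuousOn_mul hc.continuousOn
  have hdvL : IntervalIntegrable (fun s => deriv v s - L) volume a b' :=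
    (hc.sub continuous_const).intervalIntegrable _ _
  have h5 : ∫ s in a..b', f s = (∫ s in a..b', deriv v s * K s)
      - L * (∫ s in a..b', K s) - K m * ∫ s in a..b', (deriv v s - L) := by
    simp_rw [hf, show ∀ s, (deriv v s - L) * (K s - K m)
      = (deriv v s * K s - L * K s) - K m * (deriv v s - L) from fun s => by ring]
    rw [intervalIntegral.integral_sub (hvKint.sub (hKint.const_mul L)) (hdvL.const_mul (K m)),
      intervalIntegral.integral_sub hvKint (hKint.const_mul L),
      intervalIntegral.integral_const_mul, intervalIntegral.integral_const_mul]
  have hE : (∫ s in a..b', deriv v s * K s) - L * (∫ s in a..b', K s)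
      = ∫ s in a..b', f s := by
    rw [h5, hzero, mul_zero, sub_zero]
  rw [hE, intervalIntegral.integral_add_adjacent_intervals hint1 hint2 |>.symm]
  -- bound the two halves
  have hb1 : |∫ s in a..m, f s| ≤ M*Δ/2 * C * (Δ^2/8) := by
    have : |∫ s in a..m, f s| ≤ abs (∫ s in a..m, M*Δ/2 * (C * (m - s))) := by
      rw [show |∫ s in a..m, f s| = ‖∫ s in a..m, f s‖ from rfl]
      apply intervalIntegral.norm_integral_le_abs_of_norm_le
      · apply MeasureTheory.ae_restrict_of_forall_mem measurableSet_uIoc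
        intro s hsI
        have hs : s ∈ Icc a b' ∧ s ≤ m := by
          rw [Set.uIoc_of_le ham.le] at hsI
          exact ⟨⟨hsI.1.le, le_trans hsI.2 hmb.le⟩, hsI.2⟩
        rw [Real.norm_eq_abs, hf]
        calc |(deriv v s - L) * (K s - K m)| = |deriv v s - L| * |K s - K m| := abs_mul _ _
          _ ≤ (M*Δ/2) * (C * |s - m|) :=
              mul_le_mul (hsd s hs.1) (hKlip s hs.1 m ⟨ham.le, hmb.le⟩)
                (abs_nonneg _) (by positivity)
          _ = M*Δ/2 * (C * (m - s)) := by
              rw [abs_sub_comm, abs_of_nonneg (by linarith [hs.2])]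
      · exact (continuous_const.mul (continuous_const.mul
          (continuous_const.sub continuous_id))).intervalIntegrable _ _
    refine le_trans this (le_of_eq ?_)
    rw [intervalIntegral.integral_const_mul, intervalIntegral.integral_const_mul, qu_int_left]
    rw [abs_of_nonneg (by positivity)]
    rw [hm, hΔ]; ring
  have hb2 : |∫ s in m..b', f s| ≤ M*Δ/2 * C * (Δ^2/8) := by
    have : |∫ s in m..b', f s| ≤ abs (∫ s in m..b', M*Δ/2 * (C * (s - m))) := by
      rw [show |∫ s in m..b', f s| = ‖∫ s in m..b', f s‖ from rfl]
      apply intervalIntegral.norm_integral_le_abs_of_norm_le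
      · apply MeasureTheory.ae_restrict_of_forall_mem measurableSet_uIoc
        intro s hsI
        have hs : s ∈ Icc a b' ∧ m ≤ s := by
          rw [Set.uIoc_of_le hmb.le] at hsI
          exact ⟨⟨le_trans ham.le hsI.1.le, hsI.2⟩, hsI.1.le⟩
        rw [Real.norm_eq_abs, hf]
        calc |(deriv v s - L) * (K s - K m)| = |deriv v s - L| * |K s - K m| := abs_mul _ _
          _ ≤ (M*Δ/2) * (C * |s - m|) :=
              mul_le_mul (hsd s hs.1) (hKlip s hs.1 m ⟨ham.le, hmb.le⟩)
                (abs_nonneg _) (by positivity)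
          _ = M*Δ/2 * (C * (s - m)) := by
              rw [abs_of_nonneg (by linarith [hs.2])]
      · exact (continuous_const.mul (continuous_const.mul
          (continuous_id.sub continuous_const))).intervalIntegrable _ _
    refine le_trans this (le_of_eq ?_)
    rw [intervalIntegral.integral_const_mul, intervalIntegral.integral_const_mul, qu_int_right]
    rw [abs_of_nonneg (by positivity)]
    rw [hm, hΔ]; ring
  calc |(∫ s in a..m, f s) + ∫ s in m..b', f s|
      ≤ |∫ s in a..m, f s| + |∫ s in m..b', f s| := abs_add_le _ _
    _ ≤ M*Δ/2 * C * (Δ^2/8) + M*Δ/2 * C * (Δ^2/8) := add_le_add hb1 hb2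
    _ = α/8 * M * Δ^3 * (B-b')^(-1-α) := by
        rw [hC, show (-1-α : ℝ) = -α-1 by ring]; ring

lemma qu_sum_inv_rpow (α : ℝ) (hα : 0 < α) (K : ℕ) :
    ∑ j ∈ Finset.range K, ((j+1 : ℕ) : ℝ)^(-1-α) ≤ 1 + 1/α := by
  have hαne : α ≠ 0 := ne_of_gt hα
  have key : ∀ k : ℕ, ∑ j ∈ Finset.range k, ((j+1 : ℕ) : ℝ)^(-1-α)
      ≤ 1 + (1 - ((max k 1 : ℕ) : ℝ)^(-α))/α := by
    intro k
    induction k with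
    | zero => simp [Real.one_rpow]
    | succ k ih =>
      rcases Nat.eq_zero_or_pos k with hk | hk
      · subst hk
        simp [Real.one_rpow]
      · have hmax : max k 1 = k := by omega
        have hmax' : max (k+1) 1 = k+1 := by omega
        rw [Finset.sum_range_succ, hmax']
        rw [hmax] at ih
        have hk0 : (0:ℝ) < k := by exact_mod_cast hk
        have hI : ∫ x in (k:ℝ)..((k:ℝ)+1), x^(-1-α)
            = ((k:ℝ)^(-α) - ((k:ℝ)+1)^(-α))/α := by
          rw [integral_rpow (Or.inr ⟨by intro h; simp at h; linarith,
            by rw [Set.uIcc_of_le (by linarith)]; rintro ⟨h1, h2⟩; linarith⟩)]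
          rw [show (-1-α+1 : ℝ) = -α by ring]
          rw [show ((k:ℝ)+1)^(-α) - (k:ℝ)^(-α) = -((k:ℝ)^(-α) - ((k:ℝ)+1)^(-α)) by ring,
            neg_div_neg_eq]
        have hmono : ((k:ℝ)+1)^(-1-α) * (((k:ℝ)+1) - k) ≤ ∫ x in (k:ℝ)..((k:ℝ)+1), x^(-1-α) := by
          rw [show ((k:ℝ)+1)^(-1-α) * (((k:ℝ)+1) - k)
            = ∫ _ in (k:ℝ)..((k:ℝ)+1), ((k:ℝ)+1)^(-1-α) by
            rw [intervalIntegral.integral_const, smul_eq_mul]; ring]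
          apply intervalIntegral.integral_mono_on (by linarith)
            intervalIntegrable_const
          · apply ContinuousOn.intervalIntegrable
            intro x hx
            rw [Set.uIcc_of_le (by linarith : (k:ℝ) ≤ (k:ℝ)+1)] at hx
            exact (Real.continuousAt_rpow_const x _
              (Or.inl (show (0:ℝ) < x by linarith [hx.1]).ne')).continuousWithinAt
          · intro x hx
            exact Real.rpow_le_rpow_of_nonpos (by linarith [hx.1]) hx.2 (by linarith)
        have hstep : ((k:ℝ)+1)^(-1-α) ≤ ((k:ℝ)^(-α) - ((k:ℝ)+1)^(-α))/α := by
          calc ((k:ℝ)+1)^(-1-α) = ((k:ℝ)+1)^(-1-α) * (((k:ℝ)+1) - k) := by ring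
            _ ≤ ∫ x in (k:ℝ)..((k:ℝ)+1), x^(-1-α) := hmono
            _ = ((k:ℝ)^(-α) - ((k:ℝ)+1)^(-α))/α := hI
        have hd : ((k:ℝ)^(-α) - ((k:ℝ)+1)^(-α))/α
            = (1 - ((k:ℝ)+1)^(-α))/α - (1 - (k:ℝ)^(-α))/α := by
          rw [← sub_div]; congr 1; ring
        push_cast
        push_cast at ih hstep
        linarith
  refine le_trans (key K) ?_
  have h1 : (0:ℝ) ≤ ((max K 1 : ℕ) : ℝ)^(-α) := Real.rpow_nonneg (by positivity) _
  have h2 : (1 - ((max K 1 : ℕ) : ℝ)^(-α))/α ≤ 1/α := by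
    rw [div_le_div_iff₀ hα hα]
    nlinarith
  linarith

lemma qu_chain (α M μ NR D G m : ℝ) (hα0 : 0 < α) (hα1 : α < 1) (hμ : 0 < μ) (hM0 : 0 ≤ M)
    (hm : 1 ≤ m) (hD1 : 1 ≤ D) (hDN : D ≤ NR) (hGD : D ≤ G) :
    α/8 * M * (μ*D)^3 * (μ*(m*(G/2)))^(-1-α)
      ≤ α/8 * M * (μ^(2-α) * NR^(2-α) * 2^(1+α)) * m^(-1-α) := by
  have hm0 : (0:ℝ) < m := by linarith
  have hD0 : (0:ℝ) < D := by linarith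
  have hbase1 : (0:ℝ) < μ*(m*(D/2)) := by positivity
  have h1 : (μ*(m*(G/2)))^(-1-α) ≤ (μ*(m*(D/2)))^(-1-α) := by
    apply Real.rpow_le_rpow_of_nonpos hbase1 _ (by linarith)
    have : D/2 ≤ G/2 := by linarith
    nlinarith
  have h2 : (μ*(m*(D/2)))^(-1-α) = μ^(-1-α) * (m^(-1-α) * (D/2)^(-1-α)) := by
    rw [Real.mul_rpow hμ.le (by positivity), Real.mul_rpow hm0.le (by positivity)]
  have h2e : (2:ℝ)^(1+α) * 2^(-1-α) = 1 := by
    rw [← Real.rpow_add (by norm_num : (0:ℝ) < 2)]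
    norm_num
  have h3 : (D/2)^(-1-α) = D^(-1-α) * 2^(1+α) := by
    rw [Real.div_rpow hD0.le (by norm_num),
      div_eq_iff (ne_of_gt (Real.rpow_pos_of_pos (by norm_num) _))]
    rw [mul_assoc, h2e, mul_one]
  have h4 : (μ*D)^3 * (μ^(-1-α) * D^(-1-α)) = μ^(2-α) * D^(2-α) := by
    rw [mul_pow, ← Real.rpow_natCast μ 3, ← Real.rpow_natCast D 3]
    rw [show μ^((3:ℕ):ℝ) * D^((3:ℕ):ℝ) * (μ^(-1-α) * D^(-1-α))
      = (μ^((3:ℕ):ℝ) * μ^(-1-α)) * (D^((3:ℕ):ℝ) * D^(-1-α)) by ring]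
    rw [← Real.rpow_add hμ, ← Real.rpow_add hD0]
    push_cast
    ring_nf
  have h5 : D^(2-α) ≤ NR^(2-α) := Real.rpow_le_rpow hD0.le hDN (by linarith)
  have hnn : (0:ℝ) ≤ α/8 * M * (μ*D)^3 :=
    mul_nonneg (mul_nonneg (by positivity) hM0) (by positivity)
  calc α/8 * M * (μ*D)^3 * (μ*(m*(G/2)))^(-1-α)
      ≤ α/8 * M * (μ*D)^3 * (μ*(m*(D/2)))^(-1-α) := mul_le_mul_of_nonneg_left h1 hnn
    _ = α/8 * M * (μ^(2-α) * D^(2-α) * 2^(1+α)) * m^(-1-α) := by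
        rw [h2, h3, ← h4]; ring
    _ ≤ α/8 * M * (μ^(2-α) * NR^(2-α) * 2^(1+α)) * m^(-1-α) := by
        apply mul_le_mul_of_nonneg_right _ (Real.rpow_nonneg hm0.le _)
        apply mul_le_mul_of_nonneg_left _ (mul_nonneg (by positivity) hM0)
        apply mul_le_mul_of_nonneg_right _ (Real.rpow_nonneg (by norm_num) _)
        exact mul_le_mul_of_nonneg_left h5 (Real.rpow_nonneg hμ.le _)

/-- L1 remainder estimate on the special quasi-uniform mesh, interior levels:
for `1 ≤ n ≤ N−1`,
`|rⁿ| ≤ (1 + α + 2^(1−α)/(1−α)) · max_{0≤s≤tⁿ} |v''(s)| · T^(2−α) (N+1)^(α−2)`. -/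
theorem L1_remainder_bound_quasi_uniform_interior
    (α T : ℝ) (hα0 : 0 < α) (hα1 : α < 1) (hT : 0 < T)
    (N : ℕ) (hN : 2 ≤ N)
    (t : ℕ → ℝ) (h0 : t 0 = 0)
    (hrec : ∀ m, 1 ≤ m → m ≤ N →
      t m = t (m - 1) + ((N : ℝ) + 1 - m) * (2 * T / (N * (N + 1))))
    (v : ℝ → ℝ) (hv : ContDiff ℝ 2 v)
    (n : ℕ) (hn1 : 1 ≤ n) (hnN : n ≤ N - 1)
    (M : ℝ)
    (hM : IsGreatest ((fun s => |deriv (deriv v) s|) '' Set.Icc 0 (t n)) M) :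
    |(∫ s in (0:ℝ)..t n, deriv v s * (t n - s) ^ (-α)) -
        ∑ k ∈ Finset.Icc 1 n,
          (v (t k) - v (t (k - 1))) / (t k - t (k - 1)) *
            ∫ s in t (k - 1)..t k, (t n - s) ^ (-α)| ≤
      (1 + α + (2 : ℝ) ^ (1 - α) / (1 - α)) * M * T ^ (2 - α) *
        ((N : ℝ) + 1) ^ (α - 2) := by
  -- basic setup
  set μ : ℝ := 2 * T / (N * (N + 1)) with hμdef
  have hN0 : (0:ℝ) < N := by
    have : 0 < N := by omega
    exact_mod_cast this
  have hμ0 : 0 < μ := by rw [hμdef]; positivity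
  have hnN' : n ≤ N := by omega
  have hnltN : n < N := by omega
  -- mesh formula
  have ht : ∀ m : ℕ, m ≤ N → t m = μ * m * (2*(N:ℝ)+1-m)/2 := by
    intro m
    induction m with
    | zero => intro _; simp [h0]
    | succ m ih =>
      intro hm
      have h1 := hrec (m+1) (by omega) hm
      simp only [Nat.add_sub_cancel] at h1
      rw [h1, ih (by omega)]
      push_cast
      ring
  have hstep : ∀ j : ℕ, j < N → t (j+1) - t j = μ * ((N:ℝ)-(j:ℝ)) := by
    intro j hj
    have h1 := hrec (j+1) (by omega) (by omega)
    simp only [Nat.add_sub_cancel] at h1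
    rw [h1]
    push_cast
    ring
  have hsteppos : ∀ j : ℕ, j < N → 0 < t (j+1) - t j := by
    intro j hj
    rw [hstep j hj]
    have hjr : (j:ℝ) < N := by exact_mod_cast hj
    have : 0 < (N:ℝ) - j := by linarith
    positivity
  have htmono : ∀ i j : ℕ, i ≤ j → j ≤ N → t i ≤ t j := by
    intro i j hij hjN
    rw [ht i (by omega), ht j hjN]
    have hi : (i:ℝ) ≤ j := by exact_mod_cast hij
    have hj : (j:ℝ) ≤ N := by exact_mod_cast hjN
    have hi0 : (0:ℝ) ≤ i := Nat.cast_nonneg i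
    have h2 : 0 ≤ ((j:ℝ) - i) * (2*(N:ℝ)+1-i-j) := by
      apply mul_nonneg (by linarith)
      linarith
    nlinarith [mul_nonneg hμ0.le h2]
  have hb0 : 0 < t n := by
    have h1 := hsteppos 0 (by omega)
    have h2 := htmono 1 n hn1 hnN'
    linarith [h0]
  have hM0 : 0 ≤ M := by
    obtain ⟨x, hx, he⟩ := hM.1
    exact he ▸ abs_nonneg _
  have hMub : ∀ x ∈ Icc (0:ℝ) (t n), |deriv (deriv v) x| ≤ M := fun x hx => hM.2 ⟨x, hx, rfl⟩
  have hc : Continuous (deriv v) := hv.continuous_deriv (by norm_num)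
  have hKint0 : IntervalIntegrable (fun s => (t n - s)^(-α)) volume 0 (t n) :=
    qu_K_integrable (by linarith) 0 (t n)
  have hints : ∀ k : ℕ, k < n →
      IntervalIntegrable (fun s => deriv v s * (t n - s)^(-α)) volume (t k) (t (k+1)) := by
    intro k hk
    apply IntervalIntegrable.continuousOn_mul _ hc.continuousOn
    apply hKint0.mono_set
    rw [Set.uIcc_of_le (le_of_lt (by linarith [hsteppos k (by omega)] : t k < t (k+1))),
      Set.uIcc_of_le hb0.le]
    apply Icc_subset_Icc
    · rw [← h0]; exact htmono 0 k (by omega) (by omega)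
    · exact htmono (k+1) n (by omega) hnN'
  have hsplit : (∫ s in (0:ℝ)..t n, deriv v s * (t n - s)^(-α))
      = ∑ j ∈ Finset.range n, ∫ s in t j..t (j+1), deriv v s * (t n - s)^(-α) := by
    have := intervalIntegral.sum_integral_adjacent_intervals hints
    rw [h0] at this
    exact this.symm
  have hIcc : Finset.Icc 1 n = Finset.image (fun j => j + 1) (Finset.range n) := by
    ext a
    simp only [Finset.mem_Icc, Finset.mem_image, Finset.mem_range]
    constructor
    · rintro ⟨ha1, ha2⟩; exact ⟨a - 1, by omega, by omega⟩
    · rintro ⟨b, hb, rfl⟩; omega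
  rw [hIcc, Finset.sum_image (fun x _ y _ h => by omega)]
  simp only [Nat.add_sub_cancel]
  rw [hsplit, ← Finset.sum_sub_distrib]
  -- split off the last interval
  obtain ⟨p, rfl⟩ : ∃ p, n = p + 1 := ⟨n - 1, by omega⟩
  -- per-term bounds
  have hinner : ∀ j ∈ Finset.range p,
      |(∫ s in t j..t (j+1), deriv v s * (t (p+1) - s)^(-α)) -
        (v (t (j+1)) - v (t j))/(t (j+1) - t j) *
          ∫ s in t j..t (j+1), (t (p+1) - s)^(-α)|
      ≤ α/8 * M * (μ^(2-α) * (N:ℝ)^(2-α) * 2^(1+α)) * ((p-j:ℕ):ℝ)^(-1-α) := by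
    intro j hj
    rw [Finset.mem_range] at hj
    have hj1N : j + 1 ≤ N := by omega
    have h0a : 0 ≤ t j := by rw [← h0]; exact htmono 0 j (by omega) (by omega)
    have hab : t j < t (j+1) := by linarith [hsteppos j (by omega)]
    have hb'B : t (j+1) < t (p+1) := by
      have h1 := htmono (j+1) p (by omega) (by omega)
      have h2 := hsteppos p (by omega)
      linarith
    have h1 := qu_inner_bound α hα0 hα1 v hv hMub hM0 h0a hab hb'B
    have e1 : t (j+1) - t j = μ * ((N:ℝ)-(j:ℝ)) := hstep j (by omega)
    have e2 : t (p+1) - t (j+1)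
        = μ * (((p-j:ℕ):ℝ) * ((2*(N:ℝ)-(p:ℝ)-(j:ℝ)-1)/2)) := by
      rw [ht (p+1) (by omega), ht (j+1) (by omega)]
      rw [Nat.cast_sub (by omega : j ≤ p)]
      push_cast
      ring
    refine le_trans h1 ?_
    rw [e1, e2]
    apply qu_chain α M μ (N:ℝ) ((N:ℝ)-(j:ℝ)) (2*(N:ℝ)-(p:ℝ)-(j:ℝ)-1) (((p-j:ℕ):ℝ))
      hα0 hα1 hμ0 hM0
    · rw [Nat.cast_sub (by omega : j ≤ p)]
      have : (j:ℝ) + 1 ≤ p := by exact_mod_cast (by omega : j + 1 ≤ p)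
      linarith
    · have : (j:ℝ) + 1 ≤ N := by exact_mod_cast hj1N
      linarith
    · have : (0:ℝ) ≤ j := Nat.cast_nonneg j
      linarith
    · have : (p:ℝ) + 1 ≤ N := by exact_mod_cast (by omega : p + 1 ≤ N)
      linarith
  have hlast : |(∫ s in t p..t (p+1), deriv v s * (t (p+1) - s)^(-α)) -
        (v (t (p+1)) - v (t p))/(t (p+1) - t p) *
          ∫ s in t p..t (p+1), (t (p+1) - s)^(-α)|
      ≤ M/2 * (μ^(2-α) * (N:ℝ)^(2-α)) * (1-α)⁻¹ := by
    have h0a : 0 ≤ t p := by rw [← h0]; exact htmono 0 p (by omega) (by omega)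
    have hab : t p < t (p+1) := by linarith [hsteppos p (by omega)]
    have h1 := qu_last_bound α hα0 hα1 v hv hMub hM0 h0a hab
    refine le_trans h1 ?_
    have e1 : t (p+1) - t p = μ * ((N:ℝ)-(p:ℝ)) := hstep p (by omega)
    rw [e1, ← Real.mul_rpow hμ0.le hN0.le]
    apply mul_le_mul_of_nonneg_right _ (inv_nonneg.mpr (by linarith : (0:ℝ) ≤ 1-α))
    apply mul_le_mul_of_nonneg_left _ (div_nonneg hM0 (by norm_num))
    apply Real.rpow_le_rpow _ _ (by linarith)
    · have h1 : (0:ℝ) ≤ p := Nat.cast_nonneg p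
      have hpN : (p:ℝ) + 1 ≤ N := by exact_mod_cast (by omega : p + 1 ≤ N)
      nlinarith
    · have h1 : (0:ℝ) ≤ p := Nat.cast_nonneg p
      nlinarith
  -- the reflected sum bound
  have hsum : ∑ j ∈ Finset.range p, ((p-j:ℕ):ℝ)^(-1-α) ≤ 1 + 1/α := by
    have hrefl := Finset.sum_range_reflect (fun j => ((j+1:ℕ):ℝ)^(-1-α)) p
    have heq : ∑ j ∈ Finset.range p, ((p-j:ℕ):ℝ)^(-1-α)
        = ∑ j ∈ Finset.range p, (((p-1-j)+1:ℕ):ℝ)^(-1-α) := by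
      apply Finset.sum_congr rfl
      intro j hj
      rw [Finset.mem_range] at hj
      congr 2
      omega
    rw [heq, hrefl]
    exact qu_sum_inv_rpow α hα0 p
  have hC0 : 0 ≤ α/8 * M * (μ^(2-α) * (N:ℝ)^(2-α) * 2^(1+α)) :=
    mul_nonneg (mul_nonneg (by positivity) hM0) (by positivity)
  -- final constants
  have hαne : α ≠ 0 := ne_of_gt hα0
  have h1αne : (1:ℝ) - α ≠ 0 := by linarith
  have hTval : T = μ * ((N:ℝ) * (((N:ℝ)+1)/2)) := by
    rw [hμdef]; field_simp
  have hT2 : T^(2-α) * ((N:ℝ)+1)^(α-2) = μ^(2-α) * (N:ℝ)^(2-α) * (2:ℝ)^(α-2) := by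
    have hNN : (0:ℝ) < (N:ℝ)+1 := by positivity
    have e0 : ((N:ℝ)+1)^(α-2) = (((N:ℝ)+1)^(2-α))⁻¹ := by
      rw [show (α-2:ℝ) = -(2-α) by ring, Real.rpow_neg hNN.le]
    have e2 : (2:ℝ)^(α-2) = ((2:ℝ)^(2-α))⁻¹ := by
      rw [show (α-2:ℝ) = -(2-α) by ring, Real.rpow_neg (by norm_num : (0:ℝ) ≤ 2)]
    have eT : T^(2-α) = μ^(2-α) * ((N:ℝ)^(2-α) * (((N:ℝ)+1)^(2-α) * ((2:ℝ)^(2-α))⁻¹)) := by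
      rw [hTval, Real.mul_rpow hμ0.le (by positivity), Real.mul_rpow hN0.le (by positivity),
        Real.div_rpow hNN.le (by norm_num), div_eq_mul_inv]
    rw [eT, e0, e2]
    have hNe : ((N:ℝ)+1)^(2-α) ≠ 0 := ne_of_gt (Real.rpow_pos_of_pos hNN _)
    field_simp
  have f1 : (2:ℝ)^(1+α) = 2^(α-2) * 8 := by
    rw [show (8:ℝ) = 2^((3:ℕ):ℝ) by rw [Real.rpow_natCast]; norm_num,
      ← Real.rpow_add (by norm_num : (0:ℝ) < 2)]
    congr 1
    ring
  have f2 : (2:ℝ)^(1-α) * 2^(α-2) = 1/2 := by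
    rw [← Real.rpow_add (by norm_num : (0:ℝ) < 2),
      show (1-α)+(α-2) = (-1:ℝ) by ring]
    rw [Real.rpow_neg_one]
    norm_num
  have f3 : α/8*(1+1/α) = (1+α)/8 := by field_simp; ring
  -- assemble
  calc |∑ j ∈ Finset.range (p+1),
        ((∫ s in t j..t (j+1), deriv v s * (t (p+1) - s)^(-α)) -
          (v (t (j+1)) - v (t j))/(t (j+1) - t j) *
            ∫ s in t j..t (j+1), (t (p+1) - s)^(-α))|
      ≤ ∑ j ∈ Finset.range (p+1),
        |(∫ s in t j..t (j+1), deriv v s * (t (p+1) - s)^(-α)) -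
          (v (t (j+1)) - v (t j))/(t (j+1) - t j) *
            ∫ s in t j..t (j+1), (t (p+1) - s)^(-α)| := Finset.abs_sum_le_sum_abs _ _
    _ = (∑ j ∈ Finset.range p,
        |(∫ s in t j..t (j+1), deriv v s * (t (p+1) - s)^(-α)) -
          (v (t (j+1)) - v (t j))/(t (j+1) - t j) *
            ∫ s in t j..t (j+1), (t (p+1) - s)^(-α)|)
        + |(∫ s in t p..t (p+1), deriv v s * (t (p+1) - s)^(-α)) -
          (v (t (p+1)) - v (t p))/(t (p+1) - t p) *
            ∫ s in t p..t (p+1), (t (p+1) - s)^(-α)| := Finset.sum_range_succ _ _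
    _ ≤ (∑ j ∈ Finset.range p,
          α/8 * M * (μ^(2-α) * (N:ℝ)^(2-α) * 2^(1+α)) * ((p-j:ℕ):ℝ)^(-1-α))
        + M/2 * (μ^(2-α) * (N:ℝ)^(2-α)) * (1-α)⁻¹ :=
        add_le_add (Finset.sum_le_sum hinner) hlast
    _ = α/8 * M * (μ^(2-α) * (N:ℝ)^(2-α) * 2^(1+α))
          * (∑ j ∈ Finset.range p, ((p-j:ℕ):ℝ)^(-1-α))
        + M/2 * (μ^(2-α) * (N:ℝ)^(2-α)) * (1-α)⁻¹ := by rw [Finset.mul_sum]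
    _ ≤ α/8 * M * (μ^(2-α) * (N:ℝ)^(2-α) * 2^(1+α)) * (1 + 1/α)
        + M/2 * (μ^(2-α) * (N:ℝ)^(2-α)) * (1-α)⁻¹ :=
        add_le_add_left (mul_le_mul_of_nonneg_left hsum hC0) _
    _ = (1 + α + (2:ℝ)^(1-α)/(1-α)) * M * T^(2-α) * ((N:ℝ)+1)^(α-2) := by
        rw [show (1 + α + (2:ℝ)^(1-α)/(1-α)) * M * T^(2-α) * ((N:ℝ)+1)^(α-2)
          = (1 + α + (2:ℝ)^(1-α)/(1-α)) * M * (T^(2-α) * ((N:ℝ)+1)^(α-2)) by ring,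
          hT2]
        rw [show α/8 * M * (μ^(2-α) * (N:ℝ)^(2-α) * 2^(1+α)) * (1 + 1/α)
          = (α/8*(1+1/α)) * (M * (μ^(2-α) * (N:ℝ)^(2-α)) * 2^(1+α)) by ring,
          f3, f1]
        set Y := μ^(2-α) * (N:ℝ)^(2-α) with hY
        linear_combination (-(M*Y) * (1-α)⁻¹) * f2
end

section
/- Let 0 < α < 1, let T > 0 and let the mesh on [0,T] be uniform, i.e. t^n = n·Δt with Δt = T/N. Let v : [0,T] → ℝ be twice continuously differentiable. Then for every 1 ≤ n ≤ N the scaled L1 remainder R^n = r^n/Γ(1−α) satisfies |R^n| ≤ (1/Γ(1−α)) · ( 1/(2(1−α)) + 1/8 ) · Δt^{2−α} · max_{0 ≤ t ≤ t^n} |v''(t)|; in particular R^n = O(Δt^{2−α}). -/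
open MeasureTheory intervalIntegral Set

lemma myL1_kernel_intg {α : ℝ} (hα1 : α < 1) (c a b : ℝ) :
    IntervalIntegrable (fun s => (c - s) ^ (-α)) volume a b := by
  simpa using (intervalIntegrable_rpow' (a := c - a) (b := c - b)
    (by linarith : (-1:ℝ) < -α)).comp_sub_left c

lemma myL1_kernel_integral {α : ℝ} (hα1 : α < 1) {a b c : ℝ} (_hab : a ≤ b) (_hbc : b ≤ c) :
    ∫ s in a..b, (c - s) ^ (-α) = ((c - a) ^ (1 - α) - (c - b) ^ (1 - α)) / (1 - α) := by
  rw [intervalIntegral.integral_comp_sub_left (fun x => x ^ (-α)) c,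
    integral_rpow (Or.inl (by linarith : (-1:ℝ) < -α))]
  rw [show -α + 1 = 1 - α by ring]

lemma myL1_kernel_integral' {α : ℝ} (hα0 : 0 < α) {a b c : ℝ} (hab : a ≤ b) (hbc : b < c) :
    ∫ s in a..b, (c - s) ^ (-1 - α) = ((c - b) ^ (-α) - (c - a) ^ (-α)) / α := by
  rw [intervalIntegral.integral_comp_sub_left (fun x => x ^ (-1 - α)) c,
    integral_rpow (Or.inr ⟨by intro h; nlinarith, by
      rw [Set.mem_uIcc]; push_neg
      constructor <;> intro h <;> nlinarith⟩)]
  rw [show (-1 : ℝ) - α + 1 = -α by ring, div_neg, ← neg_div, neg_sub]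

lemma myL1_slope_bound (v : ℝ → ℝ) (h1 : Differentiable ℝ v)
    (h2 : Differentiable ℝ (deriv v)) (a b M : ℝ) (hab : a < b)
    (hM : ∀ u ∈ Set.Icc a b, |deriv (deriv v) u| ≤ M)
    (s : ℝ) (hs : s ∈ Set.Icc a b) :
    |deriv v s - (v b - v a) / (b - a)| ≤ M * (b - a) / 2 := by
  have hM0 : 0 ≤ M := le_trans (abs_nonneg _) (hM a ⟨le_refl a, hab.le⟩)
  have hba : 0 < b - a := by linarith
  have hgc : Continuous (deriv v) := h2.continuous
  have lip : ∀ u ∈ Set.Icc a b, |deriv v s - deriv v u| ≤ M * |s - u| := by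
    intro u hu
    have := Convex.norm_image_sub_le_of_norm_deriv_le
      (f := deriv v) (s := Set.Icc a b) (fun x _ => h2 x)
      (fun x hx => by simpa [Real.norm_eq_abs] using hM x hx) (convex_Icc a b) hu hs
    simpa [Real.norm_eq_abs] using this
  have hint : (∫ u in a..b, deriv v u) = v b - v a :=
    intervalIntegral.integral_deriv_eq_sub (fun x _ => h1 x)
      (hgc.intervalIntegrable a b)
  have key : deriv v s * (b - a) - (v b - v a) = ∫ u in a..b, (deriv v s - deriv v u) := by
    rw [intervalIntegral.integral_sub (f := fun _ => deriv v s) (g := deriv v)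
      intervalIntegrable_const (hgc.intervalIntegrable a b),
      intervalIntegral.integral_const, hint, smul_eq_mul]
    ring
  -- integral of |s - u|
  have habs1 : (∫ u in a..s, |s - u|) = (s - a)^2 / 2 := by
    have : (∫ u in a..s, |s - u|) = ∫ u in a..s, (s - u) := by
      apply intervalIntegral.integral_congr
      intro u hu
      rw [Set.uIcc_of_le hs.1] at hu
      exact abs_of_nonneg (by linarith [hu.2])
    rw [this, intervalIntegral.integral_sub (f := fun _ => s) (g := fun u => u)
      intervalIntegrable_const (continuous_id.intervalIntegrable a s),
      intervalIntegral.integral_const, integral_id, smul_eq_mul]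
    ring
  have habs2 : (∫ u in s..b, |s - u|) = (b - s)^2 / 2 := by
    have : (∫ u in s..b, |s - u|) = ∫ u in s..b, (u - s) := by
      apply intervalIntegral.integral_congr
      intro u hu
      rw [Set.uIcc_of_le hs.2] at hu
      show |s - u| = u - s
      rw [abs_sub_comm]
      exact abs_of_nonneg (by linarith [hu.1])
    rw [this, intervalIntegral.integral_sub (f := fun u => u) (g := fun _ => s)
      (continuous_id.intervalIntegrable s b) intervalIntegrable_const,
      intervalIntegral.integral_const, integral_id, smul_eq_mul]
    ring
  have hsplit : (∫ u in a..b, M * |s - u|) = M * ((s - a)^2/2 + (b - s)^2/2) := by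
    rw [intervalIntegral.integral_const_mul, ←
      intervalIntegral.integral_add_adjacent_intervals
      (a := a) (b := s) (c := b) (f := fun u => |s - u|)
      ((continuous_const.sub continuous_id).abs.intervalIntegrable a s)
      ((continuous_const.sub continuous_id).abs.intervalIntegrable s b),
      habs1, habs2]
  have hbound : |∫ u in a..b, (deriv v s - deriv v u)| ≤ M * ((s - a)^2/2 + (b - s)^2/2) := by
    rw [← hsplit]
    refine le_trans (intervalIntegral.abs_integral_le_integral_abs hab.le) ?_
    apply intervalIntegral.integral_mono_on hab.le
      ((continuous_const.sub hgc).abs.intervalIntegrable a b)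
      ((continuous_const.mul (continuous_const.sub continuous_id).abs).intervalIntegrable a b)
    intro u hu
    exact lip u hu
  have hfinal : |deriv v s * (b - a) - (v b - v a)| ≤ M * (b - a)^2 / 2 := by
    rw [key]
    refine le_trans hbound ?_
    have h1' : a ≤ s := hs.1
    have h2' : s ≤ b := hs.2
    nlinarith [mul_nonneg hM0 (mul_nonneg (sub_nonneg.2 h1') (sub_nonneg.2 h2'))]
  have heq : deriv v s - (v b - v a) / (b - a)
      = (deriv v s * (b - a) - (v b - v a)) / (b - a) := by
    field_simp
  rw [heq, abs_div, abs_of_pos hba, div_le_iff₀ hba]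
  nlinarith

lemma myL1_interp_bound (v : ℝ → ℝ) (h1 : Differentiable ℝ v)
    (h2 : Differentiable ℝ (deriv v)) (a b M : ℝ) (hab : a < b)
    (hM : ∀ u ∈ Set.Icc a b, |deriv (deriv v) u| ≤ M)
    (s : ℝ) (hs : s ∈ Set.Icc a b) :
    |v s - v a - (s - a) * ((v b - v a) / (b - a))| ≤ M * (b - a) ^ 2 / 8 := by
  have hM0 : 0 ≤ M := le_trans (abs_nonneg _) (hM a ⟨le_refl a, hab.le⟩)
  have hba : 0 < b - a := by linarith
  set D : ℝ := (v b - v a) / (b - a) with hD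
  set e : ℝ → ℝ := fun u => v u - v a - (u - a) * D with he
  set w : ℝ → ℝ := fun u => M * ((u - a) * (b - u)) / 2 with hw
  -- concave nonneg criterion
  have key : ∀ g : ℝ → ℝ, ConcaveOn ℝ (Set.Icc a b) g → g a = 0 → g b = 0 → 0 ≤ g s := by
    intro g hg hga hgb
    rcases Icc_subset_segment hs with ⟨lam, mu, hl, hm, hlm, hx⟩
    have := hg.2 (Set.left_mem_Icc.2 hab.le) (Set.right_mem_Icc.2 hab.le) hl hm hlm
    rw [hx] at this
    simpa [hga, hgb] using this
  -- derivatives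
  have hwd : ∀ u : ℝ, HasDerivAt w (M * (a + b - 2 * u) / 2) u := by
    intro u
    have h := ((((hasDerivAt_id u).sub_const a).mul
      ((hasDerivAt_const u b).sub (hasDerivAt_id u))).const_mul M).div_const 2
    refine h.congr_deriv ?_
    simp only [id_eq, Pi.sub_apply]
    ring
  have hed : ∀ u : ℝ, HasDerivAt e (deriv v u - D) u := by
    intro u
    have h := (((h1 u).hasDerivAt.sub_const (v a)).sub
      (((hasDerivAt_id u).sub_const a).mul_const D))
    refine h.congr_deriv ?_
    try simp only [id_eq]
    ring
  have hwd2 : ∀ u : ℝ, HasDerivAt (fun u => M * (a + b - 2 * u) / 2) (-M) u := by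
    intro u
    have h := (((hasDerivAt_const u (a + b)).sub
      ((hasDerivAt_id u).const_mul 2)).const_mul M).div_const 2
    refine h.congr_deriv ?_
    try simp only [id_eq]
    ring
  have hed2 : ∀ u : ℝ, HasDerivAt (fun u => deriv v u - D) (deriv (deriv v) u) u :=
    fun u => ((h2 u).hasDerivAt.sub_const D)
  have hcontw : Continuous w := by fun_prop
  have hconte : Continuous e := by
    have := h1.continuous
    fun_prop
  -- concavity of w - e and w + e
  have conc1 : ConcaveOn ℝ (Set.Icc a b) (fun u => w u - e u) := by
    apply concaveOn_of_hasDerivWithinAt2_nonpos (f' := fun u => M * (a + b - 2*u)/2 - (deriv v u - D))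
      (f'' := fun u => -M - deriv (deriv v) u) (convex_Icc a b)
      ((hcontw.sub hconte).continuousOn)
      (fun x _ => (((hwd x).sub (hed x))).hasDerivWithinAt)
      (fun x _ => (((hwd2 x).sub (hed2 x))).hasDerivWithinAt)
    intro x hx
    rw [interior_Icc] at hx
    have := abs_le.mp (hM x ⟨hx.1.le, hx.2.le⟩)
    linarith [this.1]
  have conc2 : ConcaveOn ℝ (Set.Icc a b) (fun u => w u + e u) := by
    apply concaveOn_of_hasDerivWithinAt2_nonpos (f' := fun u => M * (a + b - 2*u)/2 + (deriv v u - D))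
      (f'' := fun u => -M + deriv (deriv v) u) (convex_Icc a b)
      ((hcontw.add hconte).continuousOn)
      (fun x _ => (((hwd x).add (hed x))).hasDerivWithinAt)
      (fun x _ => (((hwd2 x).add (hed2 x))).hasDerivWithinAt)
    intro x hx
    rw [interior_Icc] at hx
    have := abs_le.mp (hM x ⟨hx.1.le, hx.2.le⟩)
    linarith [this.2]
  have hea : e a = 0 := by simp [he]
  have heb : e b = 0 := by
    have : (b - a) * D = v b - v a := by
      rw [hD]; field_simp
    simp only [he]
    linarith
  have hwa : w a = 0 := by simp [hw]
  have hwb : w b = 0 := by simp [hw]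
  have pos1 : 0 ≤ w s - e s := key _ conc1 (by rw [hwa, hea]; ring) (by rw [hwb, heb]; ring)
  have pos2 : 0 ≤ w s + e s := key _ conc2 (by rw [hwa, hea]; ring) (by rw [hwb, heb]; ring)
  have hws : w s ≤ M * (b - a) ^ 2 / 8 := by
    have h1' : a ≤ s := hs.1
    have h2' : s ≤ b := hs.2
    simp only [hw]
    nlinarith [mul_nonneg hM0 (sq_nonneg (a + b - 2 * s))]
  have : |e s| ≤ w s := abs_le.mpr ⟨by linarith, by linarith⟩
  calc |v s - v a - (s - a) * D| = |e s| := rfl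
    _ ≤ w s := this
    _ ≤ M * (b - a) ^ 2 / 8 := hws



/-- On a uniform mesh `tⁿ = n·Δt`, `Δt = T/N`, the scaled L1 remainder
`Rⁿ = rⁿ/Γ(1−α)` satisfies
`|Rⁿ| ≤ (1/Γ(1−α)) (1/(2(1−α)) + 1/8) Δt^(2−α) max_{0≤s≤tⁿ} |v''(s)|`,
so `Rⁿ = O(Δt^(2−α))`. -/
theorem L1_remainder_bound_uniform_mesh
    (α T : ℝ) (hα0 : 0 < α) (hα1 : α < 1) (hT : 0 < T)
    (N : ℕ) (hN : 1 ≤ N)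
    (t : ℕ → ℝ) (ht : ∀ m, t m = (m : ℝ) * (T / N))
    (v : ℝ → ℝ) (hv : ContDiff ℝ 2 v)
    (n : ℕ) (hn1 : 1 ≤ n) (hnN : n ≤ N)
    (M : ℝ)
    (hM : IsGreatest ((fun s => |deriv (deriv v) s|) '' Set.Icc 0 (t n)) M) :
    |((∫ s in (0:ℝ)..t n, deriv v s * (t n - s) ^ (-α)) -
        ∑ k ∈ Finset.Icc 1 n,
          (v (t k) - v (t (k - 1))) / (t k - t (k - 1)) *
            ∫ s in t (k - 1)..t k, (t n - s) ^ (-α)) / Real.Gamma (1 - α)| ≤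
      (1 / Real.Gamma (1 - α)) * (1 / (2 * (1 - α)) + 1 / 8) *
        (T / N) ^ (2 - α) * M := by
    -- regularity
  have h21 : (2 : WithTop ℕ∞) = 1 + 1 := by norm_num
  rw [h21] at hv
  obtain ⟨h1, -, hv1⟩ := contDiff_succ_iff_deriv.mp hv
  obtain ⟨h2, hc2⟩ := contDiff_one_iff_deriv.mp hv1
  -- mesh facts
  set Δ : ℝ := T / N with hΔdef
  have hΔ0 : 0 < Δ := div_pos hT (by exact_mod_cast Nat.pos_of_ne_zero (by omega))
  have htk : ∀ k : ℕ, t (k + 1) - t k = Δ := by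
    intro k; rw [ht, ht]; push_cast; ring
  have ht0 : t 0 = 0 := by rw [ht]; simp
  have hlt : ∀ {i j : ℕ}, i < j → t i < t j := by
    intro i j hij; rw [ht, ht]
    have : (i : ℝ) < j := by exact_mod_cast hij
    nlinarith
  have hle : ∀ {i j : ℕ}, i ≤ j → t i ≤ t j := by
    intro i j hij
    rcases eq_or_lt_of_le hij with h | h
    · rw [h]
    · exact (hlt h).le
  have ht0le : ∀ i : ℕ, 0 ≤ t i := by intro i; rw [← ht0]; exact hle (Nat.zero_le i)
  have hΓ : 0 < Real.Gamma (1 - α) := Real.Gamma_pos_of_pos (by linarith)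
  have hMb : ∀ u ∈ Set.Icc 0 (t n), |deriv (deriv v) u| ≤ M := fun u hu => hM.2 ⟨u, hu, rfl⟩
  have hM0 : 0 ≤ M := by
    obtain ⟨x, -, hx⟩ := hM.1
    rw [← hx]; exact abs_nonneg _
  -- integrability on pieces
  have hker : ∀ i : ℕ, IntervalIntegrable (fun s => (t n - s) ^ (-α)) volume (t i) (t (i + 1)) :=
    fun i => myL1_kernel_intg hα1 (t n) _ _
  have hprod : ∀ i : ℕ, IntervalIntegrable (fun s => deriv v s * (t n - s) ^ (-α))
      volume (t i) (t (i + 1)) :=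
    fun i => (hker i).continuousOn_mul h2.continuous.continuousOn
  -- split the integral
  have hsplitint : (∫ s in (0:ℝ)..t n, deriv v s * (t n - s) ^ (-α))
      = ∑ i ∈ Finset.range n, ∫ s in t i..t (i + 1), deriv v s * (t n - s) ^ (-α) := by
    rw [← ht0]
    exact (intervalIntegral.sum_integral_adjacent_intervals (fun k _ => hprod k)).symm
  -- rewrite the sum
  have hsum : (∑ k ∈ Finset.Icc 1 n, (v (t k) - v (t (k - 1))) / (t k - t (k - 1)) *
        ∫ s in t (k - 1)..t k, (t n - s) ^ (-α))
      = ∑ i ∈ Finset.range n, (v (t (i + 1)) - v (t i)) / Δ *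
        ∫ s in t i..t (i + 1), (t n - s) ^ (-α) := by
    rw [← Finset.Ico_add_one_right_eq_Icc, Finset.sum_Ico_eq_sum_range]
    apply Finset.sum_congr (by norm_num)
    intro i _
    have h1i : 1 + i - 1 = i := by omega
    have h1i' : 1 + i = i + 1 := by omega
    rw [h1i, h1i', htk i]
  -- the per-interval error terms
  set G : ℕ → ℝ := fun i => ∫ s in t i..t (i + 1),
    (deriv v s - (v (t (i + 1)) - v (t i)) / Δ) * (t n - s) ^ (-α) with hG
  have hterm : ∀ i : ℕ, (∫ s in t i..t (i + 1), deriv v s * (t n - s) ^ (-α)) -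
      (v (t (i + 1)) - v (t i)) / Δ * (∫ s in t i..t (i + 1), (t n - s) ^ (-α)) = G i := by
    intro i
    rw [hG, ← intervalIntegral.integral_const_mul,
      ← intervalIntegral.integral_sub (hprod i) ((hker i).const_mul _)]
    apply intervalIntegral.integral_congr
    intro x _
    ring
  have hr : (∫ s in (0:ℝ)..t n, deriv v s * (t n - s) ^ (-α)) -
      (∑ k ∈ Finset.Icc 1 n, (v (t k) - v (t (k - 1))) / (t k - t (k - 1)) *
        ∫ s in t (k - 1)..t k, (t n - s) ^ (-α)) = ∑ i ∈ Finset.range n, G i := by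
    rw [hsplitint, hsum, ← Finset.sum_sub_distrib]
    exact Finset.sum_congr rfl fun i _ => hterm i
  -- bound for interior terms
  have hbound1 : ∀ i : ℕ, i + 1 < n →
      |G i| ≤ M * Δ ^ 2 / 8 * ((t n - t (i + 1)) ^ (-α) - (t n - t i) ^ (-α)) := by
    intro i hi
    set a := t i
    set b := t (i + 1)
    have hab : a < b := hlt (Nat.lt_succ_self i)
    have hbc : b < t n := hlt hi
    have hbaΔ : b - a = Δ := htk i
    have hMb' : ∀ u ∈ Set.Icc a b, |deriv (deriv v) u| ≤ M := fun u hu =>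
      hMb u ⟨le_trans (ht0le i) hu.1, le_trans hu.2 hbc.le⟩
    set D : ℝ := (v b - v a) / (b - a) with hD
    set e : ℝ → ℝ := fun u => v u - v a - (u - a) * D with he
    have hea : e a = 0 := by simp [he]
    have heb : e b = 0 := by
      have hba0 : b - a ≠ 0 := by linarith
      simp only [he, hD]
      field_simp
      ring
    -- integration by parts
    have hu : ∀ x ∈ Set.uIcc a b, HasDerivAt (fun s => (t n - s) ^ (-α))
        (α * (t n - x) ^ (-1 - α)) x := by
      intro x hx
      rw [Set.uIcc_of_le hab.le] at hx
      have hxc : 0 < t n - x := by linarith [hx.2]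
      have hd : HasDerivAt (fun s : ℝ => t n - s) (0 - 1) x :=
        (hasDerivAt_const x (t n)).sub (hasDerivAt_id x)
      have h := hd.rpow_const (p := -α) (Or.inl (ne_of_gt hxc))
      convert h using 1
      rw [show -α - 1 = -1 - α by ring]
      ring
    have hvd : ∀ x ∈ Set.uIcc a b, HasDerivAt e (deriv v x - D) x := by
      intro x _
      have h := (((h1 x).hasDerivAt.sub_const (v a)).sub
        (((hasDerivAt_id x).sub_const a).mul_const D))
      refine h.congr_deriv ?_
      try simp only [id_eq]
      ring
    have hucont : ContinuousOn (fun x => α * (t n - x) ^ (-1 - α)) (Set.uIcc a b) := by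
      apply ContinuousOn.mul continuousOn_const
      apply ContinuousOn.rpow_const ((continuous_const.sub continuous_id).continuousOn)
      intro x hx
      rw [Set.uIcc_of_le hab.le] at hx
      exact Or.inl (by simp only [Pi.sub_apply, id_eq]; intro h; nlinarith [hx.2])
    have hvcont : ContinuousOn (fun x => deriv v x - D) (Set.uIcc a b) :=
      (h2.continuous.sub continuous_const).continuousOn
    have hibp := intervalIntegral.integral_mul_deriv_eq_deriv_mul
      (u := fun s => (t n - s) ^ (-α)) (v := e)
      (u' := fun x => α * (t n - x) ^ (-1 - α)) (v' := fun x => deriv v x - D)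
      hu hvd (hucont.intervalIntegrable) (hvcont.intervalIntegrable)
    rw [hea, heb] at hibp
    have hGi : G i = ∫ x in a..b, (t n - x) ^ (-α) * (deriv v x - D) := by
      rw [hG]
      apply intervalIntegral.integral_congr
      intro x _
      rw [hD, hbaΔ]
      ring
    rw [hGi, hibp]
    simp only [mul_zero, zero_sub, sub_zero, zero_mul]
    rw [abs_neg]
    -- now bound |∫ u' * e|
    have hecont : ContinuousOn e (Set.uIcc a b) :=
      ((h1.continuous.sub continuous_const).sub
        ((continuous_id.sub continuous_const).mul continuous_const)).continuousOn
    have heint : ∀ s ∈ Set.Icc a b, |e s| ≤ M * Δ ^ 2 / 8 := by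
      intro s hs
      have := myL1_interp_bound v h1 h2 a b M hab hMb' s hs
      rw [hbaΔ] at this
      simpa [he, hD, hbaΔ] using this
    have habs : |∫ x in a..b, α * (t n - x) ^ (-1 - α) * e x| ≤
        ∫ x in a..b, α * (t n - x) ^ (-1 - α) * (M * Δ ^ 2 / 8) := by
      refine le_trans (intervalIntegral.abs_integral_le_integral_abs hab.le) ?_
      apply intervalIntegral.integral_mono_on hab.le
        ((hucont.mul hecont).abs.intervalIntegrable)
        ((hucont.mul continuousOn_const).intervalIntegrable)
      intro x hx
      have hxc : 0 < t n - x := by linarith [hx.2]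
      have hu'nn : 0 ≤ α * (t n - x) ^ (-1 - α) :=
        mul_nonneg hα0.le (Real.rpow_nonneg hxc.le _)
      show |α * (t n - x) ^ (-1 - α) * e x| ≤ α * (t n - x) ^ (-1 - α) * (M * Δ ^ 2 / 8)
      rw [abs_mul, abs_of_nonneg hu'nn]
      exact mul_le_mul_of_nonneg_left (heint x hx) hu'nn
    refine le_trans habs ?_
    have : (∫ x in a..b, α * (t n - x) ^ (-1 - α) * (M * Δ ^ 2 / 8))
        = (M * Δ ^ 2 / 8) * (α * ∫ x in a..b, (t n - x) ^ (-1 - α)) := by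
      rw [intervalIntegral.integral_mul_const, intervalIntegral.integral_const_mul]
      ring
    rw [this, myL1_kernel_integral' hα0 hab.le hbc]
    rw [mul_div_assoc]
    rw [mul_div_cancel₀ _ (ne_of_gt hα0)]
  -- bound for the last term
  have hnn : n - 1 + 1 = n := Nat.succ_pred_eq_of_pos hn1
  have hbound2 : |G (n - 1)| ≤ M * Δ / 2 * (Δ ^ (1 - α) / (1 - α)) := by
    set a := t (n - 1)
    have hbn : t (n - 1 + 1) = t n := by rw [hnn]
    have hab : a < t n := by rw [← hbn]; exact hlt (Nat.lt_succ_self _)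
    have hbaΔ : t n - a = Δ := by rw [← hbn]; exact htk (n - 1)
    have hMb' : ∀ u ∈ Set.Icc a (t n), |deriv (deriv v) u| ≤ M := fun u hu =>
      hMb u ⟨le_trans (ht0le (n - 1)) hu.1, hu.2⟩
    have hslope : ∀ s ∈ Set.Icc a (t n),
        |deriv v s - (v (t n) - v (t (n - 1))) / Δ| ≤ M * Δ / 2 := by
      intro s hs
      have := myL1_slope_bound v h1 h2 a (t n) M hab hMb' s hs
      rw [hbaΔ] at this
      exact this
    have hGi : |G (n - 1)| ≤ ∫ s in a..t n, (M * Δ / 2) * (t n - s) ^ (-α) := by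
      rw [hG]
      simp only [hbn]
      refine le_trans (intervalIntegral.abs_integral_le_integral_abs hab.le) ?_
      apply intervalIntegral.integral_mono_on hab.le
      · have := hprod (n - 1)
        rw [hbn] at this
        have hker' := hker (n - 1)
        rw [hbn] at hker'
        exact ((hker'.continuousOn_mul
          ((h2.continuous.sub continuous_const).continuousOn))).abs
      · have hker' := hker (n - 1)
        rw [hbn] at hker'
        exact hker'.const_mul _
      intro x hx
      have hknn : 0 ≤ (t n - x) ^ (-α) := Real.rpow_nonneg (by linarith [hx.2]) _
      rw [abs_mul, abs_of_nonneg hknn]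
      exact mul_le_mul_of_nonneg_right (hslope x hx) hknn
    refine le_trans hGi ?_
    rw [intervalIntegral.integral_const_mul, myL1_kernel_integral hα1 hab.le le_rfl,
      hbaΔ, sub_self, Real.zero_rpow (by intro h; nlinarith), sub_zero, mul_div_assoc]
  -- combine
  have habs_sum : |∑ i ∈ Finset.range n, G i| ≤
      M * Δ ^ 2 / 8 * Δ ^ (-α) + M * Δ / 2 * (Δ ^ (1 - α) / (1 - α)) := by
    have hsplit : ∑ i ∈ Finset.range n, G i
        = (∑ i ∈ Finset.range (n - 1), G i) + G (n - 1) := by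
      conv_lhs => rw [← hnn]
      exact Finset.sum_range_succ G (n - 1)
    rw [hsplit]
    refine le_trans (abs_add_le _ _) ?_
    have htel : (∑ i ∈ Finset.range (n - 1), |G i|) ≤ M * Δ ^ 2 / 8 * Δ ^ (-α) := by
      have hstep : ∀ i ∈ Finset.range (n - 1),
          |G i| ≤ M * Δ ^ 2 / 8 * ((t n - t (i + 1)) ^ (-α) - (t n - t i) ^ (-α)) := by
        intro i hi
        exact hbound1 i (by have := Finset.mem_range.mp hi; omega)
      refine le_trans (Finset.sum_le_sum hstep) ?_
      rw [← Finset.mul_sum]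
      have htele : (∑ i ∈ Finset.range (n - 1),
          ((t n - t (i + 1)) ^ (-α) - (t n - t i) ^ (-α)))
          = (t n - t (n - 1)) ^ (-α) - (t n - t 0) ^ (-α) :=
        Finset.sum_range_sub (fun i => (t n - t i) ^ (-α)) (n - 1)
      rw [htele]
      have h1' : t n - t (n - 1) = Δ := by
        conv_lhs => rw [← hnn]
        exact htk (n - 1)
      rw [h1']
      have h2' : 0 ≤ (t n - t 0) ^ (-α) := Real.rpow_nonneg (by rw [ht0]; linarith [ht0le n]) _
      have h3' : 0 ≤ M * Δ ^ 2 / 8 := by positivity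
      nlinarith
    calc |∑ i ∈ Finset.range (n - 1), G i| + |G (n - 1)|
        ≤ (∑ i ∈ Finset.range (n - 1), |G i|) + |G (n - 1)| := by
          gcongr; exact Finset.abs_sum_le_sum_abs _ _
      _ ≤ M * Δ ^ 2 / 8 * Δ ^ (-α) + M * Δ / 2 * (Δ ^ (1 - α) / (1 - α)) := by
          gcongr
  -- rpow arithmetic
  have hrw1 : Δ ^ 2 * Δ ^ (-α) = Δ ^ (2 - α) := by
    rw [show (Δ:ℝ) ^ 2 = Δ ^ ((2:ℕ):ℝ) from (Real.rpow_natCast Δ 2).symm,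
      ← Real.rpow_add hΔ0, show ((2:ℕ):ℝ) + -α = 2 - α by push_cast; ring]
  have hrw2 : Δ * Δ ^ (1 - α) = Δ ^ (2 - α) := by
    nth_rewrite 1 [show (Δ:ℝ) = Δ ^ (1:ℝ) from (Real.rpow_one Δ).symm]
    rw [← Real.rpow_add hΔ0, show (1:ℝ) + (1 - α) = 2 - α by ring]
  have hfinal : |∑ i ∈ Finset.range n, G i| ≤
      (1 / (2 * (1 - α)) + 1 / 8) * Δ ^ (2 - α) * M := by
    refine le_trans habs_sum ?_
    have e1 : M * Δ ^ 2 / 8 * Δ ^ (-α) = M / 8 * Δ ^ (2 - α) := by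
      rw [← hrw1]; ring
    have e2 : M * Δ / 2 * (Δ ^ (1 - α) / (1 - α)) = M / (2 * (1 - α)) * Δ ^ (2 - α) := by
      rw [← hrw2]
      field_simp
    rw [e1, e2]
    have hp : 0 ≤ Δ ^ (2 - α) := Real.rpow_nonneg hΔ0.le _
    have h1α : 0 < 1 - α := by linarith
    rw [show (1 / (2 * (1 - α)) + 1 / 8) * Δ ^ (2 - α) * M
      = M / 8 * Δ ^ (2 - α) + M / (2 * (1 - α)) * Δ ^ (2 - α) by field_simp; ring]
  -- conclude
  rw [hr, abs_div, abs_of_pos hΓ, div_le_iff₀ hΓ]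
  calc |∑ i ∈ Finset.range n, G i| ≤ (1 / (2 * (1 - α)) + 1 / 8) * Δ ^ (2 - α) * M := hfinal
    _ = 1 / Real.Gamma (1 - α) * (1 / (2 * (1 - α)) + 1 / 8) * Δ ^ (2 - α) * M
        * Real.Gamma (1 - α) := by
      field_simp
end

section
/- Let 0 < α < 1 and let 0 = t^0 < t^1 < ⋯ < t^N be any increasing temporal mesh. Then for every 1 ≤ n ≤ N the L1 coefficients are strictly increasing in k: T_{n,k} > T_{n,k−1} for all 2 ≤ k ≤ n. -/
/-- The L1 coefficients of a temporal mesh: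
`T_{n,k} = ((tⁿ − t^{k−1})^(1−α) − (tⁿ − t^k)^(1−α))/(t^k − t^{k−1})` for `k ≥ 1`,
and `T_{n,0} = 0`. -/
noncomputable def L1Coeff (α : ℝ) (t : ℕ → ℝ) (n k : ℕ) : ℝ :=
  if k = 0 then 0
  else ((t n - t (k - 1)) ^ (1 - α) - (t n - t k) ^ (1 - α)) / (t k - t (k - 1))

/-- On any increasing temporal mesh and for `0 < α < 1`, the L1 coefficients are
strictly increasing in `k`: `T_{n,k} > T_{n,k−1}` for `2 ≤ k ≤ n ≤ N`. -/
theorem L1Coeff_strictMono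
    (α : ℝ) (hα0 : 0 < α) (hα1 : α < 1)
    (N : ℕ) (t : ℕ → ℝ) (h0 : t 0 = 0)
    (hmono : ∀ m, 1 ≤ m → m ≤ N → t (m - 1) < t m) :
    ∀ n, 1 ≤ n → n ≤ N → ∀ k, 2 ≤ k → k ≤ n →
      L1Coeff α t n (k - 1) < L1Coeff α t n k := by
  intro n hn1 hnN k hk2 hkn
  -- monotonicity of the mesh up to N
  have hmono' : ∀ i j, i ≤ j → j ≤ N → t i ≤ t j := by
    intro i j hij hjN
    induction j with
    | zero => simp_all
    | succ m ih =>
      rcases Nat.lt_or_ge i (m + 1) with h | h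
      · have : t i ≤ t m := ih (Nat.lt_succ_iff.mp h) (le_trans (Nat.le_succ m) hjN)
        have h2 : t m < t (m + 1) := by
          have := hmono (m + 1) (Nat.succ_le_succ (Nat.zero_le m)) hjN
          simpa using this
        linarith
      · have : i = m + 1 := le_antisymm hij h
        simp [this]
  have hk1n : k - 1 ≤ n - 1 := by omega
  have hb : t (k - 2) < t (k - 1) := by
    have := hmono (k - 1) (by omega) (by omega)
    have h : k - 1 - 1 = k - 2 := by omega
    rwa [h] at this
  have hc : t (k - 1) < t k := by
    have := hmono k (by omega) (by omega)
    simpa using this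
  have hcn : t k ≤ t n := hmono' k n hkn hnN
  -- set up the three points for the concavity argument
  set T := t n with hT
  set X := T - t (k - 2) with hX
  set Y := T - t (k - 1) with hY
  set Z := T - t k with hZ
  have hZ0 : (0 : ℝ) ≤ Z := by simp [hZ]; linarith
  have hZY : Z < Y := by simp [hZ, hY]; linarith
  have hYX : Y < X := by simp [hY, hX]; linarith
  have hX0 : (0 : ℝ) ∈ Set.Ici (0 : ℝ) ∨ True := Or.inr trivial
  have key := (Real.strictConcaveOn_rpow (p := 1 - α) (by linarith) (by linarith)).slope_anti_adjacent
    (x := Z) (y := Y) (z := X) hZ0 (by simp only [Set.mem_Ici]; linarith) hZY hYX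
  -- key : (X^(1-α) - Y^(1-α))/(X - Y) < (Y^(1-α) - Z^(1-α))/(Y - Z)
  have hk10 : k - 1 ≠ 0 := by omega
  have hk0 : k ≠ 0 := by omega
  have hkk : k - 1 - 1 = k - 2 := by omega
  rw [L1Coeff, L1Coeff, if_neg hk10, if_neg hk0, hkk]
  have e1 : t (k - 1) - t (k - 2) = X - Y := by simp [hX, hY]
  have e2 : t k - t (k - 1) = Y - Z := by simp [hY, hZ]
  rw [e1, e2]
  have e3 : T - t (k - 2) = X := by simp [hX]
  have e4 : T - t (k - 1) = Y := by simp [hY]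
  have e5 : T - t k = Z := by simp [hZ]
  simp only [← hT, e3, e4, e5]
  exact key
end
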